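/- arXiv:0807.2350 — 10 statements merged into one kernel-verified Lean document; each statement's English description precedes it below -/
import Mathlib

section
/- Let r be a real number with 0 < r < 1 and let z be a complex number with |z| ≤ r. Then |log(1+z)| ≤ (|log(1−r)|/r)·|z|, where log denotes the principal branch of the complex logarithm. -/
/-- `HasSum (fun n ↦ s^n/n) (-Real.log (1-s))` for `|s| < 1`. -/
lemma hasSum_pow_div_nat (s : ℝ) (hs : |s| < 1) :
    HasSum (fun n : ℕ ↦ s ^ n / n) (-Real.log (1 - s)) := by
  have h := Real.hasSum_pow_div_log_of_abs_lt_one hs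
  exact (hasSum_nat_add_iff' (f := fun n : ℕ ↦ s ^ n / n) 1).mp (by simpa using h)

/-- For `0 < r < 1` and `|z| ≤ r`, one has `|log(1+z)| ≤ (|log(1-r)|/r)·|z|`,
where `log` is the principal branch of the complex logarithm. -/
theorem abs_log_one_add_le (r : ℝ) (hr0 : 0 < r) (hr1 : r < 1)
    (z : ℂ) (hz : ‖z‖ ≤ r) :
    ‖Complex.log (1 + z)‖ ≤ |Real.log (1 - r)| / r * ‖z‖ := by
  set s : ℝ := ‖z‖ with hs
  have hs0 : 0 ≤ s := norm_nonneg z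
  have hsr : s ≤ r := hz
  have hs1 : s < 1 := lt_of_le_of_lt hsr hr1
  have hz1 : ‖z‖ < 1 := by exact hs1
  -- sum for log(1+z)
  have h1 := Complex.hasSum_taylorSeries_log hz1
  -- real sums
  have hgs : HasSum (fun n : ℕ ↦ s ^ n / n) (-Real.log (1 - s)) :=
    hasSum_pow_div_nat s (by rwa [abs_of_nonneg hs0])
  have hgr : HasSum (fun n : ℕ ↦ r ^ n / n) (-Real.log (1 - r)) :=
    hasSum_pow_div_nat r (by rwa [abs_of_nonneg hr0.le])
  -- norm of terms
  have hnorm : ∀ n : ℕ, ‖(-1 : ℂ) ^ (n + 1) * z ^ n / n‖ = s ^ n / n := by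
    intro n
    simp [norm_div, norm_mul, norm_pow, hs, Complex.norm_natCast]
  have hsum_norm : Summable fun n : ℕ ↦ ‖(-1 : ℂ) ^ (n + 1) * z ^ n / n‖ := by
    refine hgs.summable.congr fun n ↦ (hnorm n).symm
  have step1 : ‖Complex.log (1 + z)‖ ≤ -Real.log (1 - s) := by
    rw [← h1.tsum_eq]
    calc ‖∑' n : ℕ, (-1 : ℂ) ^ (n + 1) * z ^ n / n‖
        ≤ ∑' n : ℕ, ‖(-1 : ℂ) ^ (n + 1) * z ^ n / n‖ := norm_tsum_le_tsum_norm hsum_norm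
      _ = ∑' n : ℕ, s ^ n / n := tsum_congr hnorm
      _ = -Real.log (1 - s) := hgs.tsum_eq
  have step2 : -Real.log (1 - s) ≤ s / r * (-Real.log (1 - r)) := by
    have hterm : ∀ n : ℕ, s ^ n / n ≤ s / r * (r ^ n / n) := by
      intro n
      rcases Nat.eq_zero_or_pos n with rfl | hn
      · simp
      · obtain ⟨m, rfl⟩ := Nat.exists_eq_add_of_le hn
        have hpow : s ^ (1 + m) ≤ s / r * r ^ (1 + m) := by
          have h' : s / r * r ^ (1 + m) = s * r ^ m := by
            field_simp
            ring
          have h'' : s ^ (1 + m) = s * s ^ m := by ring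
          rw [h', h'']
          exact mul_le_mul_of_nonneg_left (pow_le_pow_left₀ hs0 hsr m) hs0
        calc s ^ (1 + m) / (1 + m : ℕ) ≤ (s / r * r ^ (1 + m)) / (1 + m : ℕ) := by
              apply div_le_div_of_nonneg_right hpow
              · positivity
          _ = s / r * (r ^ (1 + m) / (1 + m : ℕ)) := by ring
    calc -Real.log (1 - s) = ∑' n : ℕ, s ^ n / n := hgs.tsum_eq.symm
      _ ≤ ∑' n : ℕ, s / r * (r ^ n / n) :=
          Summable.tsum_le_tsum hterm hgs.summable (hgr.summable.mul_left _)
      _ = s / r * (-Real.log (1 - r)) := (hgr.mul_left (s / r)).tsum_eq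
  have habs : |Real.log (1 - r)| = -Real.log (1 - r) := by
    rw [abs_of_nonpos]
    exact Real.log_nonpos (by linarith) (by linarith)
  calc ‖Complex.log (1 + z)‖ ≤ s / r * (-Real.log (1 - r)) :=
        step1.trans step2
    _ = |Real.log (1 - r)| / r * s := by rw [habs]; ring
end

section
/- For every τ in the upper half-plane ℍ with |q_τ| ≤ 0.005 one has |(12/(2πi)⁴)·c₂(τ) − 1 − 240·q_τ| ≤ 2204·|q_τ|². -/
open scoped Real

/-- `q_τ = e^{2πiτ}`. -/
noncomputable def qPar (τ : ℂ) : ℂ := Complex.exp (2 * Real.pi * Complex.I * τ)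

/-- `c₂(τ) = ((2πi)⁴/12)·(1 + 240·Σ_{n≥1} n³ qⁿ/(1-qⁿ))`. -/
noncomputable def c₂fun (τ : ℂ) : ℂ :=
  (2 * Real.pi * Complex.I) ^ 4 / 12 *
    (1 + 240 * ∑' n : ℕ, ((n : ℂ) + 1) ^ 3 * qPar τ ^ (n + 1) / (1 - qPar τ ^ (n + 1)))

/-- `Δ(τ) = (2πi)¹²·q·∏_{n≥1}(1-qⁿ)²⁴`. -/
noncomputable def Δfun (τ : ℂ) : ℂ :=
  (2 * Real.pi * Complex.I) ^ 12 * qPar τ * ∏' n : ℕ, (1 - qPar τ ^ (n + 1)) ^ 24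

/-- The modular invariant `j(τ) = (12 c₂(τ))³/Δ(τ)`. -/
noncomputable def jfun (τ : ℂ) : ℂ := (12 * c₂fun τ) ^ 3 / Δfun τ

/-- Majorant coefficients. -/
noncomputable def vAux : ℕ → ℝ
  | 0 => 1
  | 1 => 8
  | 2 => 27 / 200
  | (n + 3) => (1 / 625) * (1 / 50) ^ n

lemma vAux_succ3 (n : ℕ) : vAux (n + 3) = (1 / 625) * (1 / 50) ^ n := rfl

lemma cube_le_aux (m : ℕ) : ((m : ℝ) + 4) ^ 3 ≤ 64 * 4 ^ m := by
  induction m with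
  | zero => norm_num
  | succ k ih =>
    have hk : (0 : ℝ) ≤ (k : ℝ) := Nat.cast_nonneg k
    have h4 : (0 : ℝ) ≤ 4 ^ k := by positivity
    push_cast
    rw [pow_succ (4 : ℝ) k]
    nlinarith [ih, mul_nonneg hk hk, mul_nonneg (mul_nonneg hk hk) hk]
  
lemma vAux_summable : Summable vAux := by
  rw [← summable_nat_add_iff 3]
  have : Summable (fun n : ℕ => (1 / 625 : ℝ) * (1 / 50) ^ n) :=
    (summable_geometric_of_lt_one (by norm_num) (by norm_num)).mul_left _
  simpa only [vAux_succ3] using this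

lemma vAux_tsum : ∑' n, vAux n = 447695 / 49000 := by
  have h := Summable.sum_add_tsum_nat_add 3 vAux_summable
  rw [← h]
  have h2 : ∑' n : ℕ, vAux (n + 3) = (1 / 625 : ℝ) * (1 - 1 / 50)⁻¹ := by
    simp only [vAux_succ3]
    rw [tsum_mul_left, tsum_geometric_of_lt_one (by norm_num) (by norm_num)]
  rw [h2]
  norm_num [Finset.sum_range_succ, vAux]

/-- For `τ ∈ ℍ` with `|q_τ| ≤ 0.005` one has
`|(12/(2πi)⁴)·c₂(τ) − 1 − 240·q_τ| ≤ 2204·|q_τ|²`. -/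
theorem abs_c2_estimate (τ : ℂ) (hτ : 0 < τ.im) (hq : ‖qPar τ‖ ≤ 0.005) :
    ‖12 / (2 * Real.pi * Complex.I) ^ 4 * c₂fun τ - 1 - 240 * qPar τ‖ ≤
      2204 * ‖qPar τ‖ ^ 2 := by
  set q : ℂ := qPar τ with hqdef
  set r : ℝ := ‖q‖ with hrdef
  have hr005 : r ≤ 0.005 := hq
  have hr0 : 0 ≤ r := norm_nonneg q
  have hr1 : r < 1 := lt_of_le_of_lt hr005 (by norm_num)
  -- bound on q powers
  have hqpow : ∀ n : ℕ, ‖q ^ (n + 1)‖ ≤ 0.005 := by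
    intro n
    rw [norm_pow]
    calc r ^ (n + 1) ≤ r ^ 1 := pow_le_pow_of_le_one hr0 hr1.le (Nat.le_add_left 1 n)
      _ = r := pow_one r
      _ ≤ 0.005 := hr005
  have hden : ∀ n : ℕ, (0.995 : ℝ) ≤ ‖1 - q ^ (n + 1)‖ := by
    intro n
    have h1 : ‖(1 : ℂ)‖ - ‖q ^ (n + 1)‖ ≤ ‖1 - q ^ (n + 1)‖ := norm_sub_norm_le _ _
    simp only [norm_one] at h1
    have := hqpow n
    linarith
  have hdenne : ∀ n : ℕ, (1 : ℂ) - q ^ (n + 1) ≠ 0 := by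
    intro n hc
    have := hden n
    rw [hc] at this
    simp at this
    linarith
  -- the series
  set f : ℕ → ℂ := fun n => ((n : ℂ) + 1) ^ 3 * q ^ (n + 1) / (1 - q ^ (n + 1)) with hfdef
  set S : ℂ := ∑' n : ℕ, f n with hSdef
  -- general abs for f
  have habsf : ∀ n : ℕ, ‖f n‖ ≤ ((n : ℝ) + 1) ^ 3 * r ^ (n + 1) / 0.995 := by
    intro n
    rw [hfdef]
    simp only
    rw [norm_div, norm_mul, norm_pow, norm_pow]
    have h1 : ‖(n : ℂ) + 1‖ = (n : ℝ) + 1 := by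
      have : ((n : ℂ) + 1) = (((n : ℝ) + 1 : ℝ) : ℂ) := by push_cast; ring
      rw [this, Complex.norm_of_nonneg (by positivity)]
    rw [h1]
    apply div_le_div_of_nonneg_left (by positivity) (by norm_num) (hden n)
  -- majorant
  set M : ℕ → ℝ := fun n => r ^ 2 / 0.995 * vAux n with hMdef
  have hMsummable : Summable M := vAux_summable.mul_left _
  -- the "subtracted" series
  set c : ℕ → ℂ := fun n => if n = 0 then q else 0 with hcdef
  have hcsummable : Summable c := by
    apply summable_of_ne_finset_zero (s := {0})
    intro b hb
    simp only [Finset.mem_singleton] at hb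
    simp [hcdef, hb]
  have hctsum : ∑' n, c n = q := tsum_ite_eq 0 (fun _ => q)
  -- bound terms of f - c
  have hbound : ∀ n : ℕ, ‖f n - c n‖ ≤ M n := by
    intro n
    match n with
    | 0 =>
      have hne : (1 : ℂ) - q ≠ 0 := by
        have := hdenne 0
        rw [pow_one] at this
        exact this
      have h0 : f 0 - c 0 = q ^ 2 / (1 - q ^ (0 + 1)) := by
        rw [hfdef, hcdef]
        simp only [if_pos rfl, pow_one, ↓reduceIte]
        field_simp
        linear_combination q * mul_inv_cancel₀ hne
      rw [h0, norm_div, norm_pow]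
      have : r ^ 2 / ‖1 - q ^ (0 + 1)‖ ≤ r ^ 2 / 0.995 :=
        div_le_div_of_nonneg_left (by positivity) (by norm_num) (hden 0)
      calc r ^ 2 / ‖1 - q ^ (0 + 1)‖ ≤ r ^ 2 / 0.995 := this
        _ = M 0 := by rw [hMdef]; show _ = r ^ 2 / 0.995 * vAux 0; rw [show vAux 0 = 1 from rfl]; ring
    | 1 =>
      have h1 : f 1 - c 1 = f 1 := by simp [hcdef]
      rw [h1]
      calc ‖f 1‖ ≤ ((1 : ℝ) + 1) ^ 3 * r ^ (1 + 1) / 0.995 := by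
            simpa using habsf 1
        _ = M 1 := by rw [hMdef]; show _ = r ^ 2 / 0.995 * vAux 1; rw [show vAux 1 = 8 from rfl]; ring
    | 2 =>
      have h1 : f 2 - c 2 = f 2 := by simp [hcdef]
      rw [h1]
      have h3 : r ^ (2 + 1) ≤ 0.005 * r ^ 2 := by
        have : r ^ 3 = r * r ^ 2 := by ring
        rw [show (2 : ℕ) + 1 = 3 from rfl, this]
        apply mul_le_mul_of_nonneg_right hr005 (by positivity)
      calc ‖f 2‖ ≤ ((2 : ℝ) + 1) ^ 3 * r ^ (2 + 1) / 0.995 := by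
            simpa using habsf 2
        _ ≤ (3 : ℝ) ^ 3 * (0.005 * r ^ 2) / 0.995 := by
            apply div_le_div_of_nonneg_right _ (by norm_num)
            nlinarith
        _ = M 2 := by rw [hMdef]; show _ = r ^ 2 / 0.995 * vAux 2; rw [show vAux 2 = 27 / 200 from rfl]; ring
    | (m + 3) =>
      have h1 : f (m + 3) - c (m + 3) = f (m + 3) := by simp [hcdef]
      rw [h1]
      have hcube : ((m : ℝ) + 3 + 1) ^ 3 ≤ 64 * 4 ^ m := by
        have := cube_le_aux m
        convert this using 2
        ring
      have hrpow : r ^ (m + 3 + 1) ≤ r ^ 2 * 0.005 ^ (m + 2) := by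
        have : r ^ (m + 3 + 1) = r ^ 2 * r ^ (m + 2) := by ring
        rw [this]
        apply mul_le_mul_of_nonneg_left _ (by positivity)
        exact pow_le_pow_left₀ hr0 hr005 (m + 2)
      have key : ((m : ℝ) + 3 + 1) ^ 3 * r ^ (m + 3 + 1) ≤ r ^ 2 * ((1 / 625) * (1 / 50) ^ m) := by
        have h4 : (0.005 : ℝ) ^ (m + 2) = 0.005 ^ m * 0.005 ^ 2 := by ring
        have h5 : (64 : ℝ) * 4 ^ m * (0.005 ^ m * 0.005 ^ 2) = (1 / 625) * (1 / 50) ^ m := by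
          rw [show ((1:ℝ)/50) ^ m = (4 * 0.005) ^ m by norm_num, mul_pow]
          ring
        calc ((m : ℝ) + 3 + 1) ^ 3 * r ^ (m + 3 + 1)
            ≤ (64 * 4 ^ m) * (r ^ 2 * 0.005 ^ (m + 2)) := by
              apply mul_le_mul hcube hrpow (by positivity) (by positivity)
          _ = r ^ 2 * ((64 : ℝ) * 4 ^ m * (0.005 ^ m * 0.005 ^ 2)) := by rw [← h4]; ring
          _ = r ^ 2 * ((1 / 625) * (1 / 50) ^ m) := by rw [h5]
      calc ‖f (m + 3)‖ ≤ ((m : ℝ) + 3 + 1) ^ 3 * r ^ (m + 3 + 1) / 0.995 := by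
            have := habsf (m + 3)
            push_cast at this ⊢
            convert this using 3 <;> push_cast <;> ring
        _ ≤ r ^ 2 * ((1 / 625) * (1 / 50) ^ m) / 0.995 := by
            apply div_le_div_of_nonneg_right key (by norm_num)
        _ = M (m + 3) := by rw [hMdef]; show _ = r ^ 2 / 0.995 * vAux (m + 3); rw [vAux_succ3]; ring
  -- summability of norms and of f
  have hnormsummable : Summable (fun n => ‖f n - c n‖) :=
    Summable.of_nonneg_of_le (fun n => norm_nonneg _) hbound hMsummable
  have hfsummable : Summable f := by
    have h1 : Summable (fun n => f n - c n) := by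
      apply Summable.of_norm hnormsummable
    have := h1.add hcsummable
    simpa using this
  -- main estimate on |S - q|
  have hSq : ‖S - q‖ ≤ r ^ 2 / 0.995 * (447695 / 49000) := by
    have h1 : S - q = ∑' n, (f n - c n) := by
      rw [Summable.tsum_sub hfsummable hcsummable, hctsum, hSdef]
    rw [h1]
    calc ‖∑' n, (f n - c n)‖ ≤ ∑' n, ‖f n - c n‖ := norm_tsum_le_tsum_norm hnormsummable
      _ ≤ ∑' n, M n := Summable.tsum_le_tsum hbound hnormsummable hMsummable
      _ = r ^ 2 / 0.995 * ∑' n, vAux n := by rw [hMdef, tsum_mul_left]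
      _ = r ^ 2 / 0.995 * (447695 / 49000) := by rw [vAux_tsum]
  -- algebraic simplification
  have hX : ((2 : ℂ) * Real.pi * Complex.I) ^ 4 ≠ 0 := by
    apply pow_ne_zero
    simp [Real.pi_ne_zero, Complex.I_ne_zero]
  have hsimp : 12 / (2 * (Real.pi : ℂ) * Complex.I) ^ 4 * c₂fun τ - 1 - 240 * q
      = 240 * (S - q) := by
    rw [c₂fun, hSdef, hfdef]
    field_simp
    ring
  rw [hsimp, norm_mul]
  have h240 : ‖(240 : ℂ)‖ = 240 := by
    rw [show ((240 : ℂ)) = ((240 : ℝ) : ℂ) by norm_num, Complex.norm_real]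
    norm_num
  rw [h240]
  have hc : (240 : ℝ) * (1 / 0.995 * (447695 / 49000)) ≤ 2204 := by norm_num
  calc 240 * ‖S - q‖ ≤ 240 * (r ^ 2 / 0.995 * (447695 / 49000)) := by
        apply mul_le_mul_of_nonneg_left hSq (by norm_num)
    _ = (240 * (1 / 0.995 * (447695 / 49000))) * r ^ 2 := by ring
    _ ≤ 2204 * r ^ 2 := mul_le_mul_of_nonneg_right hc (sq_nonneg r)
end

section
/- For every τ in the upper half-plane ℍ with |q_τ| ≤ 0.005 one has 24·|Σ_{n=2}^∞ log(1 − q_τⁿ)| ≤ 24.3·|q_τ|²; equivalently, the logarithm of (2πi)¹²·q_τ·(1−q_τ)²⁴/Δ(τ) defined as 24·Σ_{n=2}^∞ log(1−q_τⁿ) has absolute value at most 24.3·|q_τ|². -/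
open scoped Real

/-- For `τ ∈ ℍ` with `|q_τ| ≤ 0.005`: `24·|Σ_{n≥2} log(1−q_τⁿ)| ≤ 24.3·|q_τ|²`;
equivalently, the logarithm of `(2πi)¹²·q_τ·(1−q_τ)²⁴/Δ(τ)`, defined as
`24·Σ_{n≥2} log(1−q_τⁿ)`, has absolute value at most `24.3·|q_τ|²`. -/
theorem abs_log_delta_estimate (τ : ℂ) (hτ : 0 < τ.im) (hq : ‖qPar τ‖ ≤ 0.005) :
    24 * ‖∑' n : ℕ, Complex.log (1 - qPar τ ^ (n + 2))‖ ≤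
      24.3 * ‖qPar τ‖ ^ 2 := by
  set r : ℝ := ‖qPar τ‖ with hr
  have hr0 : 0 ≤ r := norm_nonneg _
  have hr1 : r < 1 := lt_of_le_of_lt hq (by norm_num)
  -- pointwise bound
  have hb : ∀ n : ℕ, ‖Complex.log (1 - qPar τ ^ (n + 2))‖ ≤ 1.003 * (r ^ 2 * r ^ n) := by
    intro n
    have habs : ‖(-(qPar τ ^ (n + 2)) : ℂ)‖ = r ^ (n + 2) := by
      simp [map_pow, hr]
    have hle : ‖(-(qPar τ ^ (n + 2)) : ℂ)‖ ≤ 0.005 := by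
      rw [habs]
      calc r ^ (n + 2) ≤ r ^ 1 := pow_le_pow_of_le_one hr0 hr1.le (by omega)
        _ = r := pow_one r
        _ ≤ 0.005 := hq
    have hlt : ‖(-(qPar τ ^ (n + 2)) : ℂ)‖ < 1 := lt_of_le_of_lt hle (by norm_num)
    have h := Complex.norm_log_one_add_le hlt
    rw [show (1 : ℂ) + -(qPar τ ^ (n + 2)) = 1 - qPar τ ^ (n + 2) by ring] at h
    refine h.trans ?_
    set w : ℝ := ‖(-(qPar τ ^ (n + 2)) : ℂ)‖ with hw
    have hw0 : 0 ≤ w := norm_nonneg _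
    have hinv : (1 - w)⁻¹ ≤ (0.995 : ℝ)⁻¹ := by
      apply inv_anti₀ (by norm_num)
      linarith
    have : w ^ 2 * (1 - w)⁻¹ / 2 + w ≤ 1.003 * w := by
      have h1 : w ^ 2 * (1 - w)⁻¹ ≤ (0.005 * w) * (0.995 : ℝ)⁻¹ := by
        apply mul_le_mul _ hinv (inv_nonneg.mpr (by linarith)) (by positivity)
        calc w ^ 2 = w * w := sq w
          _ ≤ 0.005 * w := by nlinarith
      nlinarith
    refine this.trans ?_
    have hw2 : w = r ^ 2 * r ^ n := by rw [habs]; ring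
    linarith
  -- summability
  have hg : Summable (fun n : ℕ => 1.003 * (r ^ 2 * r ^ n)) :=
    ((summable_geometric_of_lt_one hr0 hr1).mul_left _).mul_left _
  have hs : Summable (fun n : ℕ => ‖Complex.log (1 - qPar τ ^ (n + 2))‖) :=
    Summable.of_nonneg_of_le (fun n => norm_nonneg _) hb hg
  have hnorm : ‖∑' n : ℕ, Complex.log (1 - qPar τ ^ (n + 2))‖ ≤
      ∑' n : ℕ, ‖Complex.log (1 - qPar τ ^ (n + 2))‖ := norm_tsum_le_tsum_norm hs
  have hts : (∑' n : ℕ, ‖Complex.log (1 - qPar τ ^ (n + 2))‖) ≤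
      ∑' n : ℕ, 1.003 * (r ^ 2 * r ^ n) := Summable.tsum_le_tsum hb hs hg
  have hgeom : (∑' n : ℕ, 1.003 * (r ^ 2 * r ^ n)) = 1.003 * r ^ 2 * (1 - r)⁻¹ := by
    rw [tsum_mul_left, tsum_mul_left, tsum_geometric_of_lt_one hr0 hr1]
    ring
  have hfinal : 1.003 * r ^ 2 * (1 - r)⁻¹ ≤ (24.3 / 24) * r ^ 2 := by
    have hinv : (1 - r)⁻¹ ≤ (0.995 : ℝ)⁻¹ := by
      apply inv_anti₀ (by norm_num); linarith
    have : 1.003 * (1 - r)⁻¹ ≤ 24.3 / 24 := by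
      calc 1.003 * (1 - r)⁻¹ ≤ 1.003 * (0.995 : ℝ)⁻¹ := by nlinarith
        _ ≤ 24.3 / 24 := by norm_num
    nlinarith [sq_nonneg r]
  linarith [hnorm.trans (hts.trans (hgeom.le.trans hfinal))]
end

section
/- For every τ in the upper half-plane ℍ with |q_τ| ≤ 0.005 one has |(2πi)¹²·q_τ/Δ(τ) − 1 − 24·q_τ| ≤ 342·|q_τ|². -/
open scoped Real

set_option maxHeartbeats 1000000 in
lemma chooseBound (n : ℕ) : ((n + 25).choose 23 : ℝ) ≤ 300 * (26 / 3) ^ n := by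
  induction n with
  | zero => norm_num [show Nat.choose 25 23 = 300 by decide]
  | succ n ih =>
    have h1 : (n + 25).choose 23 * 23 = (n + 25).choose 22 * (n + 3) := by
      have h := Nat.choose_succ_right_eq (n + 25) 22
      rw [show n + 25 - 22 = n + 3 by omega] at h
      exact h
    have h2 : (n + 26).choose 23 = (n + 25).choose 22 + (n + 25).choose 23 :=
      Nat.choose_succ_succ (n + 25) 22
    have h3 : 3 * (n + 25).choose 22 ≤ 23 * (n + 25).choose 23 := by
      calc 3 * (n + 25).choose 22 ≤ (n + 3) * (n + 25).choose 22 :=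
            Nat.mul_le_mul_right _ (by omega)
        _ = 23 * (n + 25).choose 23 := by rw [mul_comm, ← h1, mul_comm]
    have h4 : 3 * (n + 26).choose 23 ≤ 26 * (n + 25).choose 23 := by omega
    have h5 : (3 : ℝ) * ((n + 26).choose 23 : ℝ) ≤ 26 * ((n + 25).choose 23 : ℝ) := by
      exact_mod_cast h4
    have h6 : n + 1 + 25 = n + 26 := by omega
    rw [h6, pow_succ]
    calc ((n + 26).choose 23 : ℝ) ≤ 26 / 3 * ((n + 25).choose 23 : ℝ) := by linarith
      _ ≤ 26 / 3 * (300 * (26 / 3) ^ n) := by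
          exact mul_le_mul_of_nonneg_left ih (by norm_num)
      _ = 300 * ((26 / 3) ^ n * (26 / 3)) := by ring

set_option maxHeartbeats 2000000 in
/-- For `τ ∈ ℍ` with `|q_τ| ≤ 0.005` one has
`|(2πi)¹²·q_τ/Δ(τ) − 1 − 24·q_τ| ≤ 342·|q_τ|²`. -/
theorem abs_q_div_delta_estimate (τ : ℂ) (hτ : 0 < τ.im)
    (hq : ‖qPar τ‖ ≤ 0.005) :
    ‖(2 * Real.pi * Complex.I) ^ 12 * qPar τ / Δfun τ - 1 - 24 * qPar τ‖ ≤
      342 * ‖qPar τ‖ ^ 2 := by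
  set q : ℂ := qPar τ with hqdef
  set x : ℝ := ‖q‖ with hxdef
  have hx : x ≤ 0.005 := hq
  have hx0 : 0 ≤ x := norm_nonneg _
  have hx1 : x < 1 := lt_of_le_of_lt hx (by norm_num)
  have hnq : ‖q‖ = x := hxdef.symm
  have h24 : ‖(24 : ℂ)‖ = 24 := by
    rw [show (24 : ℂ) = ((24 : ℝ) : ℂ) by norm_num, Complex.norm_real]
    norm_num
  -- basic facts about powers of q
  have hlt : ∀ n : ℕ, ‖q ^ (n + 1)‖ < 1 := by
    intro n
    rw [norm_pow, hnq]
    exact pow_lt_one₀ hx0 hx1 (Nat.succ_ne_zero n)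
  have hne : ∀ n : ℕ, (1 : ℂ) - q ^ (n + 1) ≠ 0 := by
    intro n h
    rw [sub_eq_zero] at h
    have h2 := hlt n
    rw [← h] at h2
    simp at h2
  have hxe : ∀ n : ℕ, x ^ (n + 1) ≤ x := by
    intro n
    calc x ^ (n + 1) ≤ x ^ 1 := pow_le_pow_of_le_one hx0 hx1.le (by omega)
      _ = x := pow_one x
  -- bound on the logarithms
  have hlog : ∀ n : ℕ, ‖Complex.log (1 - q ^ (n + 1))‖ ≤ 1.003 * x ^ (n + 1) := by
    intro n
    have hz : ‖(-(q ^ (n + 1)))‖ < 1 := by rw [norm_neg]; exact hlt n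
    have hb := Complex.norm_log_one_add_le hz
    rw [show (1 : ℂ) + -(q ^ (n + 1)) = 1 - q ^ (n + 1) by ring] at hb
    rw [norm_neg, norm_pow, hnq] at hb
    have h1 : x ^ (n + 1) ≤ 0.005 := le_trans (hxe n) hx
    have h3 : (0 : ℝ) ≤ x ^ (n + 1) := pow_nonneg hx0 _
    have h2 : (1 - x ^ (n + 1))⁻¹ ≤ (0.995 : ℝ)⁻¹ :=
      inv_anti₀ (by norm_num) (by linarith)
    have h4 : (x ^ (n + 1)) ^ 2 * (1 - x ^ (n + 1))⁻¹ ≤ (x ^ (n + 1)) ^ 2 * (0.995 : ℝ)⁻¹ :=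
      mul_le_mul_of_nonneg_left h2 (sq_nonneg _)
    nlinarith [hb, h4, sq_nonneg (x ^ (n + 1))]
  -- summability of the logs
  have hgeo : Summable (fun n : ℕ => x ^ n) := summable_geometric_of_lt_one hx0 hx1
  have hgeo1 : Summable (fun n : ℕ => (1.003 : ℝ) * x ^ (n + 1)) := by
    apply Summable.mul_left
    exact (summable_nat_add_iff 1).2 hgeo
  have hS : Summable (fun n : ℕ => Complex.log (1 - q ^ (n + 1))) :=
    Summable.of_norm_bounded hgeo1 hlog
  set S : ℂ := ∑' n : ℕ, Complex.log (1 - q ^ (n + 1)) with hSdef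
  set T : ℂ := ∑' n : ℕ, Complex.log (1 - q ^ (n + 2)) with hTdef
  -- the product equals exp (24 S)
  have h24S : HasSum (fun n : ℕ => (24 : ℂ) * Complex.log (1 - q ^ (n + 1))) (24 * S) :=
    hS.hasSum.mul_left 24
  have hprod0 : HasProd (fun n : ℕ => Complex.exp ((24 : ℂ) * Complex.log (1 - q ^ (n + 1))))
      (Complex.exp (24 * S)) := h24S.cexp
  have hfun : (fun n : ℕ => Complex.exp ((24 : ℂ) * Complex.log (1 - q ^ (n + 1)))) =
      fun n : ℕ => (1 - q ^ (n + 1)) ^ 24 := by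
    funext n
    rw [show ((24 : ℂ) * Complex.log (1 - q ^ (n + 1))) =
        ((24 : ℕ) : ℂ) * Complex.log (1 - q ^ (n + 1)) by norm_num]
    rw [Complex.exp_nat_mul, Complex.exp_log (hne n)]
  have hprod : HasProd (fun n : ℕ => (1 - q ^ (n + 1)) ^ 24) (Complex.exp (24 * S)) :=
    hfun ▸ hprod0
  have hP : (∏' n : ℕ, (1 - q ^ (n + 1)) ^ 24) = Complex.exp (24 * S) := hprod.tprod_eq
  -- rewrite the quotient
  have hcne : ((2 : ℂ) * Real.pi * Complex.I) ^ 12 * q ≠ 0 := by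
    apply mul_ne_zero
    · apply pow_ne_zero
      simp [Real.pi_ne_zero, Complex.I_ne_zero, Complex.ext_iff, Real.pi_pos.ne']
    · exact Complex.exp_ne_zero _
  have hΔ : Δfun τ = ((2 : ℂ) * Real.pi * Complex.I) ^ 12 * q * Complex.exp (24 * S) := by
    rw [Δfun, ← hqdef, hP]
  have hkey : ((2 : ℂ) * Real.pi * Complex.I) ^ 12 * q / Δfun τ = Complex.exp (-(24 * S)) := by
    rw [hΔ, div_mul_cancel_left₀ hcne]
    exact (Complex.exp_neg _).symm
  -- split off the first log
  have hsplit : S = Complex.log (1 - q) + T := by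
    have h := Summable.tsum_eq_zero_add hS
    rw [hSdef, hTdef]
    simpa using h
  have hne0 : (1 : ℂ) - q ≠ 0 := by simpa using hne 0
  have hexp_split : Complex.exp (-(24 * S)) = 1 / (1 - q) ^ 24 * Complex.exp (-(24 * T)) := by
    rw [hsplit, show -((24 : ℂ) * (Complex.log (1 - q) + T)) =
        -(24 * Complex.log (1 - q)) + -(24 * T) by ring, Complex.exp_add]
    congr 1
    rw [show -((24 : ℂ) * Complex.log (1 - q)) = -(((24 : ℕ) : ℂ) * Complex.log (1 - q)) by
      norm_num]
    rw [Complex.exp_neg, Complex.exp_nat_mul, Complex.exp_log hne0, one_div]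
  -- binomial series for 1/(1-q)^24
  have hqn1 : ‖q‖ < 1 := by rw [hnq]; exact hx1
  have hchoose : HasSum (fun n : ℕ => (((n + 23).choose 23 : ℕ) : ℂ) * q ^ n)
      (1 / (1 - q) ^ 24) := by
    have h := hasSum_choose_mul_geometric_of_norm_lt_one (𝕜 := ℂ) 23 hqn1
    rw [one_div] at h
    rw [one_div]
    exact h
  set A : ℂ := ∑' n : ℕ, (((n + 25).choose 23 : ℕ) : ℂ) * q ^ (n + 2) with hAdef
  have hA_eq : A = ∑' n : ℕ, (((n + 2 + 23).choose 23 : ℕ) : ℂ) * q ^ (n + 2) := rfl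
  have hsplit2 : (1 : ℂ) / (1 - q) ^ 24 = 1 + 24 * q + A := by
    have h2 := Summable.sum_add_tsum_nat_add 2 hchoose.summable
    rw [hchoose.tsum_eq] at h2
    rw [← h2, ← hA_eq]
    rw [Finset.sum_range_succ, Finset.sum_range_one]
    have e0 : (0 + 23).choose 23 = 1 := by decide
    have e1 : (1 + 23).choose 23 = 24 := by decide
    rw [e0, e1]
    push_cast
    ring
  -- bound on A
  have hr0 : (0 : ℝ) ≤ 26 / 3 * x := by positivity
  have hr1 : 26 / 3 * x < 1 := by nlinarith
  have hbound : ∀ n : ℕ, ‖(((n + 25).choose 23 : ℕ) : ℂ) * q ^ (n + 2)‖ ≤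
      300 * x ^ 2 * (26 / 3 * x) ^ n := by
    intro n
    rw [norm_mul, norm_pow, hnq, Complex.norm_natCast]
    calc ((n + 25).choose 23 : ℝ) * x ^ (n + 2) ≤ 300 * (26 / 3) ^ n * x ^ (n + 2) :=
          mul_le_mul_of_nonneg_right (chooseBound n) (pow_nonneg hx0 _)
      _ = 300 * x ^ 2 * (26 / 3 * x) ^ n := by
          rw [pow_add, mul_pow]; ring
  have hrsum : Summable (fun n : ℕ => 300 * x ^ 2 * (26 / 3 * x) ^ n) :=
    (summable_geometric_of_lt_one hr0 hr1).mul_left _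
  have hsumA : Summable (fun n : ℕ => ‖(((n + 25).choose 23 : ℕ) : ℂ) * q ^ (n + 2)‖) :=
    Summable.of_nonneg_of_le (fun n => norm_nonneg _) hbound hrsum
  have hAbound : ‖A‖ ≤ 313.6 * x ^ 2 := by
    have hc1 : ‖A‖ ≤ ∑' n : ℕ, ‖(((n + 25).choose 23 : ℕ) : ℂ) * q ^ (n + 2)‖ :=
      norm_tsum_le_tsum_norm hsumA
    have hc2 : (∑' n : ℕ, ‖(((n + 25).choose 23 : ℕ) : ℂ) * q ^ (n + 2)‖) ≤
        ∑' n : ℕ, 300 * x ^ 2 * (26 / 3 * x) ^ n := Summable.tsum_le_tsum hbound hsumA hrsum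
    have hc3 : (∑' n : ℕ, 300 * x ^ 2 * (26 / 3 * x) ^ n) = 300 * x ^ 2 * (1 - 26 / 3 * x)⁻¹ := by
      rw [tsum_mul_left, tsum_geometric_of_lt_one hr0 hr1]
    have hc4 : (1 - 26 / 3 * x)⁻¹ ≤ ((287 : ℝ) / 300)⁻¹ :=
      inv_anti₀ (by norm_num) (by linarith)
    have hc5 : 300 * x ^ 2 * (1 - 26 / 3 * x)⁻¹ ≤ 300 * x ^ 2 * ((287 : ℝ) / 300)⁻¹ :=
      mul_le_mul_of_nonneg_left hc4 (by positivity)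
    have hc6 : 300 * x ^ 2 * ((287 : ℝ) / 300)⁻¹ ≤ 313.6 * x ^ 2 := by
      rw [show ((287 : ℝ) / 300)⁻¹ = 300 / 287 by norm_num]
      nlinarith [sq_nonneg x]
    linarith [hc1, hc2, hc3 ▸ hc2, hc5, hc6]
  -- bound on T
  have hTb : ∀ n : ℕ, ‖Complex.log (1 - q ^ (n + 2))‖ ≤ 1.003 * x ^ 2 * x ^ n := by
    intro n
    calc ‖Complex.log (1 - q ^ (n + 2))‖ ≤ 1.003 * x ^ (n + 2) := hlog (n + 1)
      _ = 1.003 * x ^ 2 * x ^ n := by rw [pow_add]; ring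
  have hTrsum : Summable (fun n : ℕ => (1.003 : ℝ) * x ^ 2 * x ^ n) := hgeo.mul_left _
  have hsumT : Summable (fun n : ℕ => ‖Complex.log (1 - q ^ (n + 2))‖) :=
    Summable.of_nonneg_of_le (fun n => norm_nonneg _) hTb hTrsum
  have hTbound : ‖T‖ ≤ 1.009 * x ^ 2 := by
    have hc1 : ‖T‖ ≤ ∑' n : ℕ, ‖Complex.log (1 - q ^ (n + 2))‖ := norm_tsum_le_tsum_norm hsumT
    have hc2 : (∑' n : ℕ, ‖Complex.log (1 - q ^ (n + 2))‖) ≤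
        ∑' n : ℕ, (1.003 : ℝ) * x ^ 2 * x ^ n := Summable.tsum_le_tsum hTb hsumT hTrsum
    have hc3 : (∑' n : ℕ, (1.003 : ℝ) * x ^ 2 * x ^ n) = 1.003 * x ^ 2 * (1 - x)⁻¹ := by
      rw [tsum_mul_left, tsum_geometric_of_lt_one hx0 hx1]
    have hc4 : (1 - x)⁻¹ ≤ ((0.995 : ℝ))⁻¹ := inv_anti₀ (by norm_num) (by linarith)
    have hc5 : 1.003 * x ^ 2 * (1 - x)⁻¹ ≤ 1.003 * x ^ 2 * ((0.995 : ℝ))⁻¹ :=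
      mul_le_mul_of_nonneg_left hc4 (by positivity)
    have hc6 : 1.003 * x ^ 2 * ((0.995 : ℝ))⁻¹ ≤ 1.009 * x ^ 2 := by
      rw [show ((0.995 : ℝ))⁻¹ = 200 / 199 by norm_num]
      nlinarith [sq_nonneg x]
    linarith [hc1, hc2, hc3 ▸ hc2, hc5, hc6]
  -- bound on E2 = exp(-(24T)) - 1
  have hx2 : x ^ 2 ≤ 0.000025 := by nlinarith
  set z : ℂ := -(24 * T) with hzdef
  have hznorm : ‖z‖ ≤ 24.22 * x ^ 2 := by
    rw [hzdef, norm_neg, norm_mul, h24]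
    nlinarith [hTbound, norm_nonneg T]
  have hz1 : ‖z‖ ≤ 1 := by
    nlinarith [hznorm, hx2]
  have hE2 : ‖Complex.exp z - 1‖ ≤ 24.24 * x ^ 2 := by
    have hb := Complex.norm_exp_sub_one_sub_id_le hz1
    have h3 : ‖Complex.exp z - 1‖ ≤ ‖z‖ + ‖z‖ ^ 2 := by
      calc ‖Complex.exp z - 1‖ = ‖Complex.exp z - 1 - z + z‖ := by ring_nf
        _ ≤ ‖Complex.exp z - 1 - z‖ + ‖z‖ := norm_add_le _ _
        _ ≤ ‖z‖ ^ 2 + ‖z‖ := by linarith [hb]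
        _ = ‖z‖ + ‖z‖ ^ 2 := by ring
    have h4 : ‖z‖ ^ 2 ≤ (24.22 * x ^ 2) ^ 2 :=
      pow_le_pow_left₀ (norm_nonneg _) hznorm 2
    nlinarith [h3, h4, hznorm, hx2, sq_nonneg x, mul_le_mul_of_nonneg_right hx2 (sq_nonneg x)]
  -- put everything together
  rw [hkey, hexp_split, hsplit2]
  rw [show (1 + 24 * q + A) * Complex.exp z - 1 - 24 * q =
      A + (Complex.exp z - 1) * (1 + 24 * q + A) by ring]
  have habs : ‖A + (Complex.exp z - 1) * (1 + 24 * q + A)‖ ≤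
      ‖A‖ + ‖Complex.exp z - 1‖ * (1 + 24 * x + ‖A‖) := by
    calc ‖A + (Complex.exp z - 1) * (1 + 24 * q + A)‖
        ≤ ‖A‖ + ‖(Complex.exp z - 1) * (1 + 24 * q + A)‖ := norm_add_le _ _
      _ = ‖A‖ + ‖Complex.exp z - 1‖ * ‖1 + 24 * q + A‖ := by rw [norm_mul]
      _ ≤ ‖A‖ + ‖Complex.exp z - 1‖ * (1 + 24 * x + ‖A‖) := by
          have h1 : ‖(1 : ℂ) + 24 * q + A‖ ≤ 1 + 24 * x + ‖A‖ := by
            calc ‖(1 : ℂ) + 24 * q + A‖ ≤ ‖(1 : ℂ) + 24 * q‖ + ‖A‖ := norm_add_le _ _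
              _ ≤ ‖(1 : ℂ)‖ + ‖(24 : ℂ) * q‖ + ‖A‖ := by
                  linarith [norm_add_le (1 : ℂ) (24 * q)]
              _ = 1 + 24 * x + ‖A‖ := by rw [norm_one, norm_mul, hnq, h24]
          exact add_le_add_right (mul_le_mul_of_nonneg_left h1 (norm_nonneg _)) ‖A‖
  refine le_trans habs ?_
  have hxe2 : ‖Complex.exp z - 1‖ * x ≤ 24.24 * x ^ 2 * 0.005 :=
    mul_le_mul hE2 hx hx0 (by positivity)
  have hae : ‖Complex.exp z - 1‖ * ‖A‖ ≤ 24.24 * x ^ 2 * (313.6 * x ^ 2) :=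
    mul_le_mul hE2 hAbound (norm_nonneg _) (by positivity)
  have hx4 : x ^ 2 * x ^ 2 ≤ 0.000025 * x ^ 2 :=
    mul_le_mul_of_nonneg_right hx2 (sq_nonneg x)
  nlinarith [hAbound, hE2, hxe2, hae, hx4, norm_nonneg A, norm_nonneg (Complex.exp z - 1),
    sq_nonneg x]
end

section
/- For every τ in the upper half-plane ℍ with |q_τ| ≤ e^{−π√3} (in particular for every τ in the standard fundamental domain of SL₂(ℤ), since Im τ ≥ √3/2 there), either |j(τ)| ≤ 2500 or |q_τ| < 0.001. -/
open scoped Real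

theorem exp_negpisqrt3_le : Real.exp (-Real.pi * Real.sqrt 3) ≤ 0.0044 := by
  have h3 : (1.732:ℝ) ≤ Real.sqrt 3 := by
    rw [Real.le_sqrt (by norm_num) (by norm_num)]; norm_num
  have hpi : (3.141592:ℝ) ≤ Real.pi := Real.pi_gt_d6.le
  have h544 : (5.44:ℝ) ≤ Real.pi * Real.sqrt 3 := by nlinarith [Real.pi_pos]
  have hkey : (2500/11 : ℝ) ≤ Real.exp (Real.pi * Real.sqrt 3) := by
    have h1 : Real.exp (5.44 : ℝ) ≤ Real.exp (Real.pi * Real.sqrt 3) :=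
      Real.exp_le_exp.mpr h544
    have h2 : Real.exp (5.44:ℝ) = Real.exp 1 ^ (5:ℕ) * Real.exp 0.0275 ^ (16:ℕ) := by
      rw [← Real.exp_nat_mul, ← Real.exp_nat_mul, ← Real.exp_add]; norm_num
    have he : (2.7182818:ℝ) ≤ Real.exp 1 := by
      have := Real.exp_one_gt_d9; norm_num at this ⊢; linarith
    have hb : (1.0275:ℝ) ≤ Real.exp 0.0275 := by
      have := Real.add_one_le_exp (0.0275:ℝ); linarith
    calc (2500/11:ℝ) ≤ 2.7182818 ^ (5:ℕ) * 1.0275 ^ (16:ℕ) := by norm_num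
      _ ≤ Real.exp 1 ^ (5:ℕ) * Real.exp 0.0275 ^ (16:ℕ) := by
          apply mul_le_mul (pow_le_pow_left₀ (by norm_num) he 5)
            (pow_le_pow_left₀ (by norm_num) hb 16) (by positivity) (by positivity)
      _ = Real.exp 5.44 := h2.symm
      _ ≤ _ := h1
  rw [neg_mul, Real.exp_neg]
  rw [inv_le_comm₀ (Real.exp_pos _) (by norm_num)]
  calc (0.0044:ℝ)⁻¹ = 2500/11 := by norm_num
    _ ≤ _ := hkey

lemma cube_le_pow (m : ℕ) : ((m : ℝ) + 2) ^ 3 ≤ 16 * 2 ^ m := by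
  match m with
  | 0 => norm_num
  | 1 => norm_num
  | (k+2) =>
    induction k with
    | zero => norm_num
    | succ n ih =>
      have h2 : ((n:ℝ)+4)^3 ≤ 16 * 2 ^ (n+2) := by
        push_cast at ih ⊢; nlinarith [ih]
      have hp : (0:ℝ) ≤ 2 ^ (n+2) := by positivity
      have hh : (2:ℝ) ^ (n+1+2) = 2 * 2 ^ (n+2) := by ring
      push_cast
      rw [hh]
      nlinarith [h2, hp, Nat.cast_nonneg (α := ℝ) n]

lemma one_sub_sum_le_prod (s : Finset ℕ) (a : ℕ → ℝ) (h0 : ∀ i, 0 ≤ a i) (h1 : ∀ i, a i ≤ 1) :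
    1 - ∑ i ∈ s, a i ≤ ∏ i ∈ s, (1 - a i) := by
  induction s using Finset.cons_induction with
  | empty => simp
  | cons i s hi ih =>
    rw [Finset.prod_cons, Finset.sum_cons]
    have hs : 0 ≤ ∑ j ∈ s, a j := Finset.sum_nonneg fun j _ => h0 j
    have hpnn : (0:ℝ) ≤ ∏ j ∈ s, (1 - a j) :=
      Finset.prod_nonneg fun j _ => by linarith [h1 j]
    nlinarith [h0 i, h1 i, ih]

lemma num_bound (q : ℂ) (hx2 : ‖q‖ ≤ 0.0044) :
    ‖(1 : ℂ) + 240 * ∑' n : ℕ, ((n : ℂ) + 1) ^ 3 * q ^ (n + 1) / (1 - q ^ (n + 1))‖ ≤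
      1 + 241.2 * ‖q‖ + 3900 * ‖q‖ ^ 2 := by
  set x : ℝ := ‖q‖ with hxdef
  have hx0 : 0 ≤ x := norm_nonneg q
  have hxlt1 : x < 1 := lt_of_le_of_lt hx2 (by norm_num)
  have habs_qn : ∀ n : ℕ, ‖q ^ (n+1)‖ = x ^ (n+1) := fun n => norm_pow _ _
  have hpow_le : ∀ n : ℕ, x ^ (n+1) ≤ x := by
    intro n
    simpa using pow_le_pow_of_le_one hx0 hxlt1.le (Nat.one_le_iff_ne_zero.mpr (Nat.succ_ne_zero n))
  have habs_lb : ∀ n : ℕ, 1 - x ^ (n+1) ≤ ‖(1:ℂ) - q ^ (n+1)‖ := by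
    intro n
    have := norm_sub_norm_le (1 : ℂ) (q ^ (n+1))
    simpa [habs_qn n] using this
  have hlb : ∀ n : ℕ, (1:ℝ)/1.005 ≤ ‖(1:ℂ) - q ^ (n+1)‖ := by
    intro n
    have h1 := habs_lb n
    have h2 := hpow_le n
    norm_num
    norm_num at h1
    linarith
  have hgeom : Summable (fun n : ℕ => x ^ n) := summable_geometric_of_lt_one hx0 hxlt1
  have hsum_xn : Summable (fun n : ℕ => x ^ (n+1)) := (summable_nat_add_iff 1).mpr hgeom
  have hsum0 : Summable (fun n : ℕ => (n:ℝ)^3 * x ^ n) := by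
    have hn : ‖x‖ < 1 := by rwa [Real.norm_eq_abs, abs_of_nonneg hx0]
    exact summable_pow_mul_geometric_of_norm_lt_one 3 hn
  have hsum3 : Summable (fun n : ℕ => ((n:ℝ)+1)^3 * x ^ (n+1)) := by
    have := (summable_nat_add_iff 1).mpr hsum0
    exact this.congr (fun n => by push_cast; ring)
  have hsum_shift : Summable (fun m : ℕ => ((m:ℝ)+2)^3 * x ^ (m+2)) := by
    have := (summable_nat_add_iff 2).mpr hsum0
    exact this.congr (fun n => by push_cast; ring)
  have h2x : 2 * x < 1 := by linarith
  have h2x0 : 0 ≤ 2 * x := by linarith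
  have hsum_geo2 : Summable (fun m : ℕ => 16 * x^2 * (2*x) ^ m) :=
    (summable_geometric_of_lt_one h2x0 h2x).mul_left _
  have hT : ∑' n : ℕ, ((n:ℝ)+1)^3 * x ^ (n+1) ≤ x + 16 * x^2 * (1 - 2*x)⁻¹ := by
    rw [Summable.tsum_eq_zero_add hsum3]
    have hfirst : (((0:ℕ):ℝ)+1)^3 * x ^ (0+1) = x := by norm_num
    rw [hfirst]
    have htail : ∑' m : ℕ, (((m+1:ℕ):ℝ)+1)^3 * x ^ ((m+1)+1) ≤ 16 * x^2 * (1 - 2*x)⁻¹ := by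
      have hterm : ∀ m : ℕ, (((m+1:ℕ):ℝ)+1)^3 * x ^ ((m+1)+1) ≤ 16 * x^2 * (2*x)^m := by
        intro m
        have hc := cube_le_pow m
        have e1 : (((m+1:ℕ):ℝ)+1)^3 * x ^ ((m+1)+1) = ((m:ℝ)+2)^3 * (x^m * x^2) := by
          push_cast; ring
        have e2 : 16 * x^2 * (2*x)^m = (16 * 2^m) * (x^m * x^2) := by
          rw [mul_pow]; ring
        rw [e1, e2]
        have hxm2 : (0:ℝ) ≤ x^m * x^2 := by positivity
        exact mul_le_mul_of_nonneg_right hc hxm2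
      have hsum_left : Summable (fun m : ℕ => (((m+1:ℕ):ℝ)+1)^3 * x ^ ((m+1)+1)) :=
        hsum_shift.congr (fun n => by push_cast; ring)
      have h := Summable.tsum_le_tsum hterm hsum_left hsum_geo2
      refine h.trans ?_
      rw [tsum_mul_left, tsum_geometric_of_lt_one h2x0 h2x]
    linarith [htail]
  have hterm_norm : ∀ n : ℕ,
      ‖((n : ℂ) + 1) ^ 3 * q ^ (n + 1) / (1 - q ^ (n + 1))‖ ≤
        1.005 * (((n:ℝ)+1)^3 * x ^ (n+1)) := by
    intro n
    rw [norm_div, norm_mul, norm_pow]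
    have hcast : ‖(n : ℂ) + 1‖ = (n:ℝ) + 1 := by
      have e : ((n : ℂ) + 1) = ((n+1 : ℕ) : ℂ) := by push_cast; ring
      rw [e, Complex.norm_natCast]; push_cast; ring
    rw [hcast, habs_qn n]
    have hnum_nn : (0:ℝ) ≤ ((n:ℝ)+1)^3 * x^(n+1) := by positivity
    rw [div_le_iff₀ (lt_of_lt_of_le (by norm_num) (hlb n))]
    nlinarith [mul_le_mul_of_nonneg_left (hlb n) hnum_nn]
  have hSsum : Summable (fun n : ℕ =>
      ‖((n : ℂ) + 1) ^ 3 * q ^ (n + 1) / (1 - q ^ (n + 1))‖) := by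
    refine Summable.of_nonneg_of_le (fun n => norm_nonneg _) hterm_norm ?_
    exact hsum3.mul_left 1.005
  have hS : ‖∑' n : ℕ, ((n : ℂ) + 1) ^ 3 * q ^ (n + 1) / (1 - q ^ (n + 1))‖ ≤
      1.005 * (x + 16 * x^2 * (1 - 2*x)⁻¹) := by
    refine (norm_tsum_le_tsum_norm hSsum).trans ?_
    have h2 := Summable.tsum_le_tsum hterm_norm hSsum (hsum3.mul_left 1.005)
    refine h2.trans ?_
    rw [tsum_mul_left]
    nlinarith [hT]
  have htri : ‖(1 : ℂ) + 240 * ∑' n : ℕ, ((n : ℂ) + 1) ^ 3 * q ^ (n + 1) / (1 - q ^ (n + 1))‖ ≤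
      1 + 240 * ‖∑' n : ℕ, ((n : ℂ) + 1) ^ 3 * q ^ (n + 1) / (1 - q ^ (n + 1))‖ := by
    refine (norm_add_le _ _).trans ?_
    rw [norm_one, norm_mul]
    have : ‖(240:ℂ)‖ = 240 := by norm_num
    rw [this]
  have hinv2 : (1 - 2*x)⁻¹ ≤ 1.009 := by
    rw [inv_le_comm₀ (by linarith) (by norm_num)]
    norm_num
    linarith
  refine htri.trans ?_
  have hx2nn : (0:ℝ) ≤ x^2 := sq_nonneg x
  have hmid : 1.005 * (x + 16 * x^2 * (1 - 2*x)⁻¹) ≤ 1.005*x + 16.23 * x^2 := by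
    nlinarith [hinv2, hx2nn]
  nlinarith [hS, hmid, hx0]

lemma den_bound (q : ℂ) (hx2 : ‖q‖ ≤ 0.0044) :
    1 - 24.12 * ‖q‖ ≤ ‖∏' n : ℕ, ((1:ℂ) - q ^ (n + 1)) ^ 24‖ := by
  set x : ℝ := ‖q‖ with hxdef
  have hx0 : 0 ≤ x := norm_nonneg q
  have hxlt1 : x < 1 := lt_of_le_of_lt hx2 (by norm_num)
  have habs_qn : ∀ n : ℕ, ‖q ^ (n+1)‖ = x ^ (n+1) := fun n => norm_pow _ _
  have hpow_le : ∀ n : ℕ, x ^ (n+1) ≤ x := by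
    intro n
    simpa using pow_le_pow_of_le_one hx0 hxlt1.le (Nat.one_le_iff_ne_zero.mpr (Nat.succ_ne_zero n))
  have habs_lb : ∀ n : ℕ, 1 - x ^ (n+1) ≤ ‖(1:ℂ) - q ^ (n+1)‖ := by
    intro n
    have := norm_sub_norm_le (1 : ℂ) (q ^ (n+1))
    simpa [habs_qn n] using this
  have habs_ub : ∀ n : ℕ, ‖(1:ℂ) - q ^ (n+1)‖ ≤ 1.01 := by
    intro n
    have h := norm_sub_le (1:ℂ) (q ^ (n+1))
    rw [norm_one, habs_qn n] at h
    have := hpow_le n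
    norm_num at h ⊢
    linarith
  have hne : ∀ n : ℕ, (1:ℂ) - q ^ (n+1) ≠ 0 := by
    intro n
    intro hcontra
    have h1 := habs_lb n
    have h2 := hpow_le n
    rw [hcontra, norm_zero] at h1
    linarith
  have hgeom : Summable (fun n : ℕ => x ^ n) := summable_geometric_of_lt_one hx0 hxlt1
  have hsum_xn : Summable (fun n : ℕ => x ^ (n+1)) := (summable_nat_add_iff 1).mpr hgeom
  have htsum_xn : ∑' n : ℕ, x ^ (n+1) = x * (1-x)⁻¹ := by
    have hfun : (fun n : ℕ => x ^ (n+1)) = fun n : ℕ => x * x ^ n := by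
      funext n; ring
    rw [hfun, tsum_mul_left, tsum_geometric_of_lt_one hx0 hxlt1]
  -- bound on ‖(1-q^{n+1})^24 - 1‖
  have hw : ∀ n : ℕ, ‖((1:ℂ) - q ^ (n+1)) ^ 24 - 1‖ ≤ 31 * x ^ (n+1) := by
    intro n
    have hgs := geom_sum₂_mul ((1:ℂ) - q ^ (n+1)) 1 24
    -- (∑ i in range 24, (1-q^{n+1})^i * 1^(24-1-i)) * ((1-q^{n+1}) - 1) = (1-q^{n+1})^24 - 1^24
    have he : ((1:ℂ) - q ^ (n+1)) ^ 24 - 1 =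
        (∑ i ∈ Finset.range 24, ((1:ℂ) - q ^ (n+1)) ^ i * 1 ^ (24-1-i)) * (-(q ^ (n+1))) := by
      linear_combination -hgs
    rw [he, norm_mul, norm_neg, habs_qn n]
    have hsumnorm : ‖∑ i ∈ Finset.range 24, ((1:ℂ) - q ^ (n+1)) ^ i * 1 ^ (24-1-i)‖ ≤ 31 := by
      refine (norm_sum_le _ _).trans ?_
      have hterm : ∀ i ∈ Finset.range 24, ‖((1:ℂ) - q ^ (n+1)) ^ i * 1 ^ (24-1-i)‖ ≤ 1.01 ^ 23 := by
        intro i hi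
        rw [norm_mul, one_pow, norm_one, mul_one, norm_pow]
        have h1 : ‖(1:ℂ) - q ^ (n+1)‖ ^ i ≤ 1.01 ^ i :=
          pow_le_pow_left₀ (norm_nonneg _) (habs_ub n) i
        refine h1.trans ?_
        have hi' : i ≤ 23 := Nat.lt_succ_iff.mp (Finset.mem_range.mp hi)
        exact pow_le_pow_right₀ (by norm_num) hi'
      refine (Finset.sum_le_sum hterm).trans ?_
      rw [Finset.sum_const, Finset.card_range, nsmul_eq_mul]
      norm_num
    exact mul_le_mul_of_nonneg_right hsumnorm (pow_nonneg hx0 _)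
  -- multipliability
  have hlog : Summable (fun n : ℕ => Complex.log (((1:ℂ) - q ^ (n+1)) ^ 24)) := by
    refine Summable.of_norm_bounded (g := fun n => (3/2) * (31 * x ^ (n+1))) ?_ ?_
    · exact (hsum_xn.mul_left 31).mul_left (3/2)
    · intro n
      have hz : ‖((1:ℂ) - q ^ (n+1)) ^ 24 - 1‖ ≤ 1/2 := by
        refine (hw n).trans ?_
        have := hpow_le n
        nlinarith [hx2, hpow_le n]
      have he : ((1:ℂ) - q ^ (n+1)) ^ 24 = 1 + (((1:ℂ) - q ^ (n+1)) ^ 24 - 1) := by ring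
      rw [he]
      refine (Complex.norm_log_one_add_half_le_self hz).trans ?_
      exact mul_le_mul_of_nonneg_left (hw n) (by norm_num)
  have hMult : Multipliable (fun n : ℕ => ((1:ℂ) - q ^ (n+1)) ^ 24) := by
    have := Complex.multipliable_of_summable_log hlog
    exact this
  -- lower bound via partial products
  have hc0 : 0 ≤ 1 - x * (1-x)⁻¹ := by
    have hinv : (1-x)⁻¹ ≤ 1.005 := by
      rw [inv_le_comm₀ (by linarith) (by norm_num)]
      norm_num; linarith
    nlinarith [hinv, hx0]
  have hfin : ∀ s : Finset ℕ, (1 - x * (1-x)⁻¹) ^ 24 ≤ ∏ n ∈ s, ‖((1:ℂ) - q ^ (n+1)) ^ 24‖ := by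
    intro s
    have hsum_le : ∑ n ∈ s, x ^ (n+1) ≤ x * (1-x)⁻¹ := by
      refine le_of_le_of_eq (Summable.sum_le_tsum s (fun n _ => pow_nonneg hx0 _) hsum_xn) htsum_xn
    have h1 : 1 - x * (1-x)⁻¹ ≤ ∏ n ∈ s, (1 - x ^ (n+1)) := by
      refine le_trans ?_ (one_sub_sum_le_prod s (fun n => x ^ (n+1)) (fun n => pow_nonneg hx0 _)
        (fun n => le_trans (hpow_le n) hxlt1.le))
      linarith
    have h2 : ∏ n ∈ s, (1 - x ^ (n+1)) ≤ ∏ n ∈ s, ‖(1:ℂ) - q ^ (n+1)‖ := by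
      refine Finset.prod_le_prod (fun n _ => ?_) (fun n _ => habs_lb n)
      have := hpow_le n
      linarith
    calc (1 - x * (1-x)⁻¹) ^ 24 ≤ (∏ n ∈ s, ‖(1:ℂ) - q ^ (n+1)‖) ^ 24 :=
          pow_le_pow_left₀ hc0 (h1.trans h2) 24
      _ = ∏ n ∈ s, ‖((1:ℂ) - q ^ (n+1)) ^ 24‖ := by
          rw [← Finset.prod_pow]
          exact Finset.prod_congr rfl (fun n _ => (norm_pow _ _).symm)
  have hProd : (1 - x * (1-x)⁻¹) ^ 24 ≤ ∏' n : ℕ, ‖((1:ℂ) - q ^ (n+1)) ^ 24‖ := by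
    exact ge_of_tendsto' hMult.norm.hasProd hfin
  rw [Multipliable.norm_tprod hMult]
  refine le_trans ?_ hProd
  -- 1 - 24.12x ≤ (1 - x(1-x)⁻¹)^24
  have hinv : (1-x)⁻¹ ≤ 1.005 := by
    rw [inv_le_comm₀ (by linarith) (by norm_num)]
    norm_num; linarith
  have hxx : x * (1-x)⁻¹ ≤ 1.005 * x := by
    nlinarith [hinv, hx0, inv_nonneg.mpr (by linarith : (0:ℝ) ≤ 1 - x)]
  have hb : 1 + 24 * (-(1.005 * x)) ≤ (1 + (-(1.005 * x))) ^ 24 := by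
    refine one_add_mul_le_pow ?_ 24
    nlinarith [hx0, hx2]
  calc (1:ℝ) - 24.12 * x = 1 + 24 * (-(1.005 * x)) := by ring
    _ ≤ (1 + (-(1.005 * x))) ^ 24 := hb
    _ ≤ (1 - x * (1-x)⁻¹) ^ 24 := by
        refine pow_le_pow_left₀ ?_ ?_ 24
        · nlinarith [hx0, hx2]
        · linarith [hxx]

/-- For `τ ∈ ℍ` with `|q_τ| ≤ e^{−π√3}` (in particular for `τ` in the standard
fundamental domain of `SL₂(ℤ)`), either `|j(τ)| ≤ 2500` or `|q_τ| < 0.001`. -/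
theorem j_bounded_or_q_small (τ : ℂ) (hτ : 0 < τ.im)
    (hq : ‖qPar τ‖ ≤ Real.exp (-Real.pi * Real.sqrt 3)) :
    ‖jfun τ‖ ≤ 2500 ∨ ‖qPar τ‖ < 0.001 := by
  rcases lt_or_ge (‖qPar τ‖) 0.001 with h | hx1
  · exact Or.inr h
  left
  set q : ℂ := qPar τ with hqdef
  set x : ℝ := ‖q‖ with hxdef
  have hxn : ‖q‖ = x := rfl
  have hx2 : x ≤ 0.0044 := le_trans hq exp_negpisqrt3_le
  have hx0 : (0.001:ℝ) ≤ x := hx1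
  have hN := num_bound q (by rw [hxn]; exact hx2)
  have hP := den_bound q (by rw [hxn]; exact hx2)
  rw [hxn] at hN hP
  set S : ℂ := ∑' n : ℕ, ((n : ℂ) + 1) ^ 3 * q ^ (n + 1) / (1 - q ^ (n + 1)) with hSdef
  set P : ℂ := ∏' n : ℕ, ((1:ℂ) - q ^ (n + 1)) ^ 24 with hPdef
  have h2pi : ‖(2 * (Real.pi:ℂ) * Complex.I)‖ = 2 * Real.pi := by
    rw [norm_mul, norm_mul, Complex.norm_I, Complex.norm_real, Real.norm_eq_abs,
      abs_of_pos Real.pi_pos, mul_one]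
    norm_num
  have hc2eq : (12:ℂ) * c₂fun τ = (2*(Real.pi:ℂ)*Complex.I)^4 * (1 + 240*S) := by
    rw [c₂fun, ← hqdef, ← hSdef]; ring
  have hnum' : ‖((12:ℂ)*c₂fun τ)^3‖ = (2*Real.pi)^12 * ‖(1:ℂ)+240*S‖^3 := by
    rw [norm_pow, hc2eq, norm_mul, norm_pow, h2pi]; ring
  have hden' : ‖Δfun τ‖ = (2*Real.pi)^12 * (x * ‖P‖) := by
    rw [Δfun, ← hqdef, ← hPdef, norm_mul, norm_mul, norm_pow, h2pi, hxn]; ring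
  have hPpos : (0:ℝ) < ‖P‖ := by
    have : (0:ℝ) < 1 - 24.12 * x := by nlinarith
    linarith
  have hxpos : (0:ℝ) < x := by linarith
  have habs : ‖jfun τ‖ = ‖jfun τ‖ := rfl
  rw [habs, jfun, norm_div, hnum', hden']
  have hdenpos : (0:ℝ) < (2*Real.pi)^12 * (x * ‖P‖) := by
    have := Real.pi_pos; positivity
  rw [div_le_iff₀ hdenpos]
  have hNn : (0:ℝ) ≤ ‖(1:ℂ)+240*S‖ := norm_nonneg _
  have hkey : ‖(1:ℂ)+240*S‖^3 ≤ 2500 * (x * ‖P‖) := by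
    have h1 : ‖(1:ℂ)+240*S‖^3 ≤ (1 + 241.2*x + 3900*x^2)^3 :=
      pow_le_pow_left₀ hNn hN 3
    have h2 : (1 + 241.2*x + 3900*x^2)^3 ≤ 2500*x*(1-24.12*x) := by
      nlinarith [mul_nonneg (sub_nonneg.2 hx0) (sub_nonneg.2 hx2), sq_nonneg x, sq_nonneg (x - 0.002),
        mul_nonneg (mul_nonneg (sub_nonneg.2 hx0) (sub_nonneg.2 hx2)) (sq_nonneg x),
        mul_nonneg (mul_nonneg (sub_nonneg.2 hx0) (sub_nonneg.2 hx2)) (mul_nonneg (le_trans (by norm_num) hx0) (le_trans (by norm_num) hx0)),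
        mul_nonneg (mul_nonneg (mul_nonneg (sub_nonneg.2 hx0) (sub_nonneg.2 hx2)) (le_trans (by norm_num) hx0)) (sq_nonneg x)]
    have h3 : 2500*x*(1-24.12*x) ≤ 2500*x*‖P‖ :=
      mul_le_mul_of_nonneg_left hP (by positivity)
    calc ‖(1:ℂ)+240*S‖^3 ≤ (1 + 241.2*x + 3900*x^2)^3 := h1
      _ ≤ 2500*x*(1-24.12*x) := h2
      _ ≤ 2500*x*‖P‖ := h3
      _ = 2500 * (x * ‖P‖) := by ring
  calc (2*Real.pi)^12 * ‖(1:ℂ)+240*S‖^3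
      ≤ (2*Real.pi)^12 * (2500 * (x * ‖P‖)) :=
        mul_le_mul_of_nonneg_left hkey (by positivity)
    _ = 2500 * ((2*Real.pi)^12 * (x * ‖P‖)) := by ring
end

section
/- For every τ in the upper half-plane ℍ with |q_τ| < 0.001 one has |j(τ) − q_τ^{−1}| ≤ 1100; if moreover |j(τ)| > 2500, then (1/2)·|j(τ)| ≤ |q_τ^{−1}| ≤ (3/2)·|j(τ)|. -/
open scoped Real

lemma aux_cube_le (n : ℕ) : ((n:ℝ)+1)^3 ≤ 8^n := by
  induction n with
  | zero => norm_num
  | succ n ih =>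
    have hn : (0:ℝ) ≤ (n:ℝ) := n.cast_nonneg
    push_cast
    calc ((n:ℝ)+1+1)^3 ≤ 8*((n:ℝ)+1)^3 := by
          nlinarith [mul_nonneg hn hn, mul_nonneg (mul_nonneg hn hn) hn]
    _ ≤ 8*8^n := by nlinarith
    _ = 8^(n+1) := by ring

lemma aux_pow_sub_one (z : ℂ) (m : ℕ) : ‖(1+z)^m - 1‖ ≤ (1+‖z‖)^m - 1 := by
  induction m with
  | zero => simp
  | succ m ih =>
    have h1 : (1+z)^(m+1) - 1 = ((1+z)^m - 1)*(1+z) + z := by ring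
    have h2 : ‖(1:ℂ)+z‖ ≤ 1+‖z‖ := (norm_add_le _ _).trans (by simp)
    have h3 : (1:ℝ) ≤ (1+‖z‖)^m := one_le_pow₀ (by simp [norm_nonneg])
    calc ‖(1+z)^(m+1) - 1‖ = ‖((1+z)^m - 1)*(1+z) + z‖ := by rw [h1]
    _ ≤ ‖(1+z)^m - 1‖*‖(1:ℂ)+z‖ + ‖z‖ := by
        refine (norm_add_le _ _).trans ?_; rw [norm_mul]
    _ ≤ ((1+‖z‖)^m - 1)*(1+‖z‖) + ‖z‖ :=
        add_le_add (mul_le_mul ih h2 (norm_nonneg _) (by linarith)) le_rfl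
    _ = (1+‖z‖)^(m+1) - 1 := by ring

lemma aux_pow_le (t : ℝ) (ht : 0 ≤ t) (m : ℕ) : (1+t)^(m+1) - 1 ≤ (m+1)*t*(1+t)^m := by
  induction m with
  | zero => norm_num
  | succ m ih =>
    have hp : (0:ℝ) ≤ (1+t)^m := by positivity
    have h3 : t ≤ t*(1+t)^(m+1) := by
      nlinarith [one_le_pow₀ (by linarith : (1:ℝ) ≤ 1+t) (n := m+1)]
    have h1 : (1+t)^(m+1+1) - 1 = ((1+t)^(m+1)-1)*(1+t) + t := by ring
    rw [h1]
    push_cast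
    calc ((1+t)^(m+1)-1)*(1+t) + t
        ≤ ((m:ℝ)+1)*t*(1+t)^m*(1+t) + t*(1+t)^(m+1) := by
          refine add_le_add (mul_le_mul_of_nonneg_right ih (by linarith)) h3
    _ = ((m:ℝ)+1)*t*(1+t)^(m+1) + t*(1+t)^(m+1) := by rw [pow_succ]; ring
    _ = ((m:ℝ)+1+1)*t*(1+t)^(m+1) := by ring


set_option maxHeartbeats 1000000 in
/-- For `τ ∈ ℍ` with `|q_τ| < 0.001` one has `|j(τ) − q_τ⁻¹| ≤ 1100`; if moreover
`|j(τ)| > 2500`, then `(1/2)·|j(τ)| ≤ |q_τ⁻¹| ≤ (3/2)·|j(τ)|`. -/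
theorem abs_j_sub_qinv_small (τ : ℂ) (hτ : 0 < τ.im)
    (hq : ‖qPar τ‖ < 0.001) :
    ‖jfun τ - (qPar τ)⁻¹‖ ≤ 1100 ∧
      (2500 < ‖jfun τ‖ →
        1 / 2 * ‖jfun τ‖ ≤ ‖(qPar τ)⁻¹‖ ∧
          ‖(qPar τ)⁻¹‖ ≤ 3 / 2 * ‖jfun τ‖) := by
  set q : ℂ := qPar τ with hqdef
  have hq0 : q ≠ 0 := Complex.exp_ne_zero _
  set x : ℝ := ‖q‖ with hxdef
  have hx : x < 0.001 := hq
  have hx0 : 0 < x := norm_pos_iff.mpr hq0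
  have hx1 : x < 1 := by linarith
  -- powers of q
  have hxpow : ∀ n : ℕ, ‖q^(n+1)‖ = x^(n+1) := fun n => norm_pow q (n+1)
  have hxple : ∀ n : ℕ, x^(n+1) ≤ x := by
    intro n
    calc x^(n+1) ≤ x^1 := pow_le_pow_of_le_one hx0.le hx1.le (by omega)
    _ = x := pow_one x
  -- ====== the Eisenstein sum ======
  set S : ℂ := ∑' n : ℕ, ((n : ℂ) + 1) ^ 3 * q ^ (n + 1) / (1 - q ^ (n + 1)) with hSdef
  have hgsum : HasSum (fun n : ℕ => (x/(1-x)) * (8*x)^n) ((x/(1-x)) * (1-8*x)⁻¹) :=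
    (hasSum_geometric_of_lt_one (by positivity) (by linarith)).mul_left _
  have hterm : ∀ n : ℕ, ‖((n : ℂ) + 1) ^ 3 * q ^ (n + 1) / (1 - q ^ (n + 1))‖
      ≤ (x/(1-x)) * (8*x)^n := by
    intro n
    have hnn : ‖((n:ℂ)+1)‖ = (n:ℝ)+1 := by
      rw [show ((n:ℂ)+1) = ((n+1:ℕ):ℂ) by push_cast; ring, Complex.norm_natCast]
      push_cast; ring
    have hden : 1 - x ≤ ‖(1:ℂ) - q^(n+1)‖ := by
      have h := norm_sub_norm_le (1:ℂ) (q^(n+1))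
      rw [norm_one, hxpow] at h
      linarith [hxple n]
    have hnum : ‖((n : ℂ) + 1) ^ 3 * q ^ (n + 1)‖ ≤ 8^n * x^(n+1) := by
      rw [norm_mul, norm_pow, hnn, hxpow]
      exact mul_le_mul_of_nonneg_right (aux_cube_le n) (pow_nonneg hx0.le _)
    rw [norm_div]
    calc ‖((n : ℂ) + 1) ^ 3 * q ^ (n + 1)‖ / ‖(1:ℂ) - q^(n+1)‖
        ≤ (8^n * x^(n+1)) / (1-x) :=
          div_le_div₀ (mul_nonneg (by positivity) (pow_nonneg hx0.le _)) hnum (by linarith) hden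
    _ = (x/(1-x)) * (8*x)^n := by rw [mul_pow]; ring
  have hS : ‖S‖ ≤ (x/(1-x)) * (1-8*x)⁻¹ := tsum_of_norm_bounded hgsum hterm
  have hS' : ‖S‖ ≤ 1.0125 * x := by
    have e1 : x/(1-x) ≤ x*1.002 := by rw [div_le_iff₀ (by linarith)]; nlinarith
    have e2 : (1-8*x)⁻¹ ≤ (0.992:ℝ)⁻¹ :=
      inv_anti₀ (by norm_num) (by linarith)
    calc ‖S‖ ≤ (x/(1-x)) * (1-8*x)⁻¹ := hS
    _ ≤ (x*1.002) * (0.992:ℝ)⁻¹ :=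
        mul_le_mul e1 e2 (inv_nonneg.mpr (by linarith)) (by nlinarith)
    _ ≤ 1.0125 * x := by rw [mul_inv_le_iff₀ (by norm_num)]; nlinarith
  -- ====== A = (1 + 240 S)^3 ======
  set A : ℂ := (1 + 240*S)^3 with hAdef
  have hu : ‖(240:ℂ)*S‖ ≤ 243*x := by
    rw [norm_mul]
    have : ‖(240:ℂ)‖ = 240 := by norm_num
    rw [this]; linarith
  have hu' : ‖(240:ℂ)*S‖ ≤ 0.243 := by linarith
  have hA : ‖A - 1‖ ≤ 921*x := by
    set u : ℂ := 240*S with hudef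
    have hexp : A - 1 = u*u*u + 3*(u*u) + 3*u := by rw [hAdef]; ring
    have hn0 : (0:ℝ) ≤ ‖u‖ := norm_nonneg u
    have h1 : ‖A - 1‖ ≤ ‖u‖*‖u‖*‖u‖ + 3*(‖u‖*‖u‖) + 3*‖u‖ := by
      rw [hexp]
      calc ‖u*u*u + 3*(u*u) + 3*u‖ ≤ ‖u*u*u + 3*(u*u)‖ + ‖(3:ℂ)*u‖ := norm_add_le _ _
      _ ≤ ‖u*u*u‖ + ‖(3:ℂ)*(u*u)‖ + ‖(3:ℂ)*u‖ := by
          linarith [norm_add_le (u*u*u) ((3:ℂ)*(u*u))]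
      _ ≤ ‖u‖*‖u‖*‖u‖ + 3*(‖u‖*‖u‖) + 3*‖u‖ := by
          simp only [norm_mul]
          have h3 : ‖(3:ℂ)‖ = 3 := by norm_num
          rw [h3]
    have hsq : ‖u‖*‖u‖ ≤ 0.243*0.243 := mul_le_mul hu' hu' hn0 (by norm_num)
    calc ‖A - 1‖ ≤ ‖u‖*‖u‖*‖u‖ + 3*(‖u‖*‖u‖) + 3*‖u‖ := h1
    _ = ‖u‖*(‖u‖*‖u‖ + 3*‖u‖ + 3) := by ring
    _ ≤ (243*x)*(0.243*0.243 + 3*0.243 + 3) := by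
        refine mul_le_mul hu (by nlinarith) (by positivity) (by positivity)
    _ ≤ 921*x := by nlinarith
  -- ====== the product ======
  set f : ℕ → ℂ := fun n => (1 - q^(n+1))^24 with hfdef
  have hbase0 : ∀ n : ℕ, (1:ℂ) - q^(n+1) ≠ 0 := by
    intro n h
    have h1 : (1:ℂ) = q^(n+1) := by linear_combination h
    have h2 : (1:ℝ) = x^(n+1) := by rw [← hxpow n, ← h1, norm_one]
    linarith [hxple n]
  have hf0 : ∀ n : ℕ, f n ≠ 0 := fun n => pow_ne_zero _ (hbase0 n)
  have hv : ∀ n : ℕ, ‖f n - 1‖ ≤ 25 * x^(n+1) := by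
    intro n
    have h1 : f n - 1 = (1 + (-q^(n+1)))^24 - 1 := by rw [hfdef]; ring_nf
    have h2 : ‖f n - 1‖ ≤ (1 + x^(n+1))^24 - 1 := by
      rw [h1]
      have := aux_pow_sub_one (-q^(n+1)) 24
      rwa [norm_neg, hxpow] at this
    have hxp0 : (0:ℝ) ≤ x^(n+1) := by positivity
    have h3 : (1 + x^(n+1))^24 - 1 ≤ 24 * x^(n+1) * (1 + x^(n+1))^23 := by
      have := aux_pow_le (x^(n+1)) hxp0 23
      norm_num at this ⊢
      convert this using 2
    have h4 : (1 + x^(n+1))^23 ≤ (1.001:ℝ)^23 := by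
      refine pow_le_pow_left₀ (by positivity) ?_ 23
      linarith [hxple n]
    have h5 : 24 * (1.001:ℝ)^23 ≤ 25 := by norm_num
    calc ‖f n - 1‖ ≤ 24 * x^(n+1) * (1 + x^(n+1))^23 := h2.trans h3
    _ ≤ 24 * x^(n+1) * (1.001:ℝ)^23 := by
        refine mul_le_mul_of_nonneg_left h4 (by positivity)
    _ = (24 * (1.001:ℝ)^23) * x^(n+1) := by ring
    _ ≤ 25 * x^(n+1) := mul_le_mul_of_nonneg_right h5 hxp0
  have hlog : ∀ n : ℕ, ‖Complex.log (f n)‖ ≤ (37.5*x) * x^n := by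
    intro n
    have h1 : ‖f n - 1‖ ≤ 1/2 := by
      have := hv n
      have := hxple n
      nlinarith
    have h2 : ‖Complex.log (1 + (f n - 1))‖ ≤ 3/2 * ‖f n - 1‖ :=
      Complex.norm_log_one_add_half_le_self h1
    rw [show (1:ℂ) + (f n - 1) = f n by ring] at h2
    calc ‖Complex.log (f n)‖ ≤ 3/2 * ‖f n - 1‖ := h2
    _ ≤ 3/2 * (25 * x^(n+1)) := by linarith [hv n, norm_nonneg (f n - 1)]
    _ = (37.5*x) * x^n := by rw [pow_succ]; ring
  have hlogsum : Summable (fun n : ℕ => Complex.log (f n)) := by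
    refine Summable.of_norm_bounded (g := fun n => (37.5*x) * x^n) ?_ hlog
    exact (summable_geometric_of_lt_one hx0.le hx1).mul_left _
  set L : ℂ := ∑' n : ℕ, Complex.log (f n) with hLdef
  have hLsum : HasSum (fun n : ℕ => (37.5*x) * x^n) ((37.5*x) * (1-x)⁻¹) :=
    (hasSum_geometric_of_lt_one hx0.le hx1).mul_left _
  have hL : ‖L‖ ≤ 38*x := by
    have h := tsum_of_norm_bounded hLsum hlog
    calc ‖L‖ ≤ (37.5*x) * (1-x)⁻¹ := h
    _ ≤ 38*x := by
        rw [mul_inv_le_iff₀ (by linarith)]; nlinarith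
  set P : ℂ := ∏' n : ℕ, f n with hPdef
  have hPL : P = Complex.exp L := by
    exact (Complex.cexp_tsum_eq_tprod hf0 hlogsum).symm
  have hP1 : ‖P - 1‖ ≤ 76*x := by
    rw [hPL]
    have hL1 : ‖L‖ ≤ 1 := by linarith
    have := Complex.norm_exp_sub_one_le hL1
    linarith
  have hPn : 0.924 ≤ ‖P‖ := by
    have h := norm_sub_norm_le (1:ℂ) P
    rw [norm_one, norm_sub_rev] at h
    linarith
  have hPne : P ≠ 0 := by rw [hPL]; exact Complex.exp_ne_zero _
  -- ====== algebraic identity ======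
  have hπ : (Real.pi:ℂ) ≠ 0 := by
    exact_mod_cast Real.pi_ne_zero
  have hc : (2*(Real.pi:ℂ)*Complex.I) ≠ 0 := by
    refine mul_ne_zero (mul_ne_zero two_ne_zero hπ) Complex.I_ne_zero
  have hj : jfun τ = A / (q*P) := by
    rw [jfun, c₂fun, Δfun, hAdef]
    rw [← hqdef, ← hSdef]
    have hPP : (∏' n : ℕ, (1 - q ^ (n + 1)) ^ 24) = P := by rw [hPdef, hfdef]
    rw [hPP]
    field_simp
  have hji : jfun τ - q⁻¹ = (A - P)/(q*P) := by
    rw [hj]; field_simp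
  -- ====== final bound ======
  have hAP : ‖A - P‖ ≤ 997*x := by
    calc ‖A - P‖ = ‖(A - 1) - (P - 1)‖ := by rw [show A - P = (A - 1) - (P - 1) from by ring]
    _ ≤ ‖A - 1‖ + ‖P - 1‖ := norm_sub_le _ _
    _ ≤ 997*x := by linarith
  have hmain : ‖jfun τ - q⁻¹‖ ≤ 1100 := by
    rw [hji, norm_div, norm_mul]
    have hqP : (0:ℝ) < ‖q‖ * ‖P‖ := mul_pos hx0 (lt_of_lt_of_le (by norm_num) hPn)
    rw [div_le_iff₀ hqP]
    calc ‖A - P‖ ≤ 997*x := hAP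
    _ ≤ 1100 * (x * ‖P‖) := by nlinarith
    _ = 1100 * (‖q‖ * ‖P‖) := by rw [hxdef]
  refine ⟨hmain, fun hbig => ?_⟩
  have l1 : ‖jfun τ‖ - ‖jfun τ - q⁻¹‖ ≤ ‖q⁻¹‖ := by
    have h := norm_sub_norm_le (jfun τ) (jfun τ - q⁻¹)
    simpa using h
  have l2 : ‖q⁻¹‖ ≤ ‖jfun τ - q⁻¹‖ + ‖jfun τ‖ := by
    have h := norm_sub_le (jfun τ - q⁻¹) (jfun τ)
    have e : jfun τ - q⁻¹ - jfun τ = -q⁻¹ := by ring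
    rw [e, norm_neg] at h
    exact h
  constructor
  · linarith only [l1, hmain, hbig]
  · linarith only [l2, hmain, hbig]
end

section
/- Let a = (a₁, a₂) ∈ ℚ² with a₁ ∉ ℤ, and let N be a positive integer such that N·a₁ ∈ ℤ. Then for every τ in the upper half-plane ℍ with |q_τ| ≤ 10^{−N} one has | log|g_a(τ)| − ℓ_a·log|q_τ| | ≤ 3·|q_τ|^{1/N}. -/
open scoped Real

/-- `e(a) = e^{2πia}` for a rational number `a`. -/
noncomputable def eRat (a : ℚ) : ℂ := Complex.exp (2 * Real.pi * Complex.I * (a : ℂ))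

/-- `q_τ^a = e^{2πiaτ}` for a rational number `a`. -/
noncomputable def qRatPow (τ : ℂ) (a : ℚ) : ℂ :=
  Complex.exp (2 * Real.pi * Complex.I * (a : ℂ) * τ)

/-- The second Bernoulli polynomial `B₂(T) = T² − T + 1/6`, evaluated on `ℚ`. -/
def B₂ (t : ℚ) : ℚ := t ^ 2 - t + 1 / 6

/-- `ℓ_a = B₂(a₁ − ⌊a₁⌋)/2` for `a = (a₁, a₂) ∈ ℚ²`. -/
def ℓSiegel (a : ℚ × ℚ) : ℚ := B₂ (Int.fract a.1) / 2

/-- The Siegel function `g_a(τ)`, defined for `a = (a₁, a₂) ∈ ℚ²` with `a ∉ ℤ²` by the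
convergent product
`g_a(τ) = −q_τ^{B₂(a₁)/2}·e(a₂(a₁−1)/2)·(1−q_z)·∏_{n≥1}(1−q_τⁿ q_z)(1−q_τⁿ/q_z)`,
where `q_z = q_τ^{a₁}·e(a₂)`. -/
noncomputable def gSiegel (a : ℚ × ℚ) (τ : ℂ) : ℂ :=
  -(qRatPow τ (B₂ a.1 / 2)) * eRat (a.2 * (a.1 - 1) / 2) *
    (1 - qRatPow τ a.1 * eRat a.2) *
    ∏' n : ℕ, ((1 - qPar τ ^ (n + 1) * (qRatPow τ a.1 * eRat a.2)) *
      (1 - qPar τ ^ (n + 1) / (qRatPow τ a.1 * eRat a.2)))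

private lemma sum_range_affine (K : ℕ) (c : ℝ) :
    ∑ n ∈ Finset.range K, ((n : ℝ) + c) = K * (K - 1) / 2 + K * c := by
  induction K with
  | zero => simp
  | succ k ih => rw [Finset.sum_range_succ, ih]; push_cast; ring

private lemma log_abs_one_sub_bound {w : ℂ} {s : ℝ} (hw : ‖w‖ ≤ s) (hs : s ≤ 1/10) :
    |Real.log (‖1 - w‖)| ≤ (10/9) * s := by
  have h0 : 0 ≤ s := le_trans (norm_nonneg w) hw
  have hub : ‖1 - w‖ ≤ 1 + s := by
    calc ‖1 - w‖ ≤ ‖(1:ℂ)‖ + ‖w‖ := by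
          simpa [sub_eq_add_neg] using norm_add_le 1 (-w)
      _ ≤ 1 + s := by simp [hw]
  have hlb : 1 - s ≤ ‖1 - w‖ := by
    have := norm_add_le (1 - w) w
    simp only [sub_add_cancel] at this
    simp only [norm_one] at this
    linarith
  have hpos : (0:ℝ) < 1 - s := by linarith
  rw [abs_le]
  constructor
  · have h1 : Real.log (1 - s) ≤ Real.log (‖1 - w‖) :=
      Real.log_le_log hpos hlb
    have h2 : Real.log (1 - s)⁻¹ ≤ (1 - s)⁻¹ - 1 :=
      Real.log_le_sub_one_of_pos (by positivity)
    rw [Real.log_inv] at h2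
    have h3 : (1 - s)⁻¹ - 1 ≤ (10/9) * s := by
      rw [inv_eq_one_div, div_sub' (ne_of_gt hpos), div_le_iff₀ hpos]
      nlinarith
    linarith
  · have h1 : Real.log (‖1 - w‖) ≤ Real.log (1 + s) :=
      Real.log_le_log (by linarith) hub
    have h2 : Real.log (1 + s) ≤ s := by
      have := Real.log_le_sub_one_of_pos (x := 1 + s) (by linarith)
      linarith
    linarith

private lemma key_bound {r : ℝ} (hr0 : 0 < r) {w : ℂ} {e : ℝ}
    (hw : ‖w‖ = r ^ e) (he : e ≠ 0) (hs : r ^ |e| ≤ 1/10) :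
    |Real.log (‖1 - w‖) - Real.log r * min e 0| ≤ (10/9) * r ^ |e| := by
  rcases lt_or_gt_of_ne he with hneg | hpos
  · have hw0 : ‖w‖ ≠ 0 := by
      rw [hw]; exact ne_of_gt (Real.rpow_pos_of_pos hr0 e)
    have hw0' : w ≠ 0 := by simpa using hw0
    have habs : ‖w⁻¹‖ = r ^ |e| := by
      rw [norm_inv, hw, ← Real.rpow_neg hr0.le, abs_of_neg hneg]
    have key : ‖1 - w‖ = ‖w‖ * ‖1 - w⁻¹‖ := by
      rw [← norm_mul]
      rw [show w * (1 - w⁻¹) = -(1 - w) by field_simp; ring, norm_neg]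
    have h2 : ‖1 - w⁻¹‖ ≠ 0 := by
      intro h
      have hww : w = 1 := by
        have h' : (1:ℂ) - w⁻¹ = 0 := by simpa using h
        exact inv_eq_one.mp (sub_eq_zero.mp h').symm
      rw [hww] at habs
      simp at habs
      rw [← habs] at hs
      linarith
    have hlog : Real.log (‖1 - w‖) =
        e * Real.log r + Real.log (‖1 - w⁻¹‖) := by
      rw [key, Real.log_mul hw0 h2, hw, Real.log_rpow hr0]
    rw [hlog, min_eq_left hneg.le]
    have := log_abs_one_sub_bound (w := w⁻¹) (s := r ^ |e|) habs.le hs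
    calc |e * Real.log r + Real.log (‖1 - w⁻¹‖) - Real.log r * e|
        = |Real.log (‖1 - w⁻¹‖)| := by ring_nf
      _ ≤ (10/9) * r ^ |e| := this
  · rw [min_eq_right hpos.le, mul_zero, sub_zero]
    refine log_abs_one_sub_bound ?_ hs
    rw [hw, abs_of_pos hpos]

private lemma min_identity (k : ℤ) (f : ℝ) (hf0 : 0 < f) (hf1 : f < 1) :
    min ((k : ℝ) + f) 0
      + ∑' n : ℕ, (min ((n : ℝ) + 1 + ((k : ℝ) + f)) 0 + min ((n : ℝ) + 1 - ((k : ℝ) + f)) 0)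
      = (f ^ 2 - f - ((k : ℝ) + f) ^ 2 + ((k : ℝ) + f)) / 2 := by
  rcases le_or_gt 0 k with hk | hk
  · lift k to ℕ using hk
    push_cast
    have hsum : ∑' n : ℕ, (min ((n : ℝ) + 1 + ((k : ℝ) + f)) 0 + min ((n : ℝ) + 1 - ((k : ℝ) + f)) 0)
        = ∑ n ∈ Finset.range k, ((n : ℝ) + (1 - ((k : ℝ) + f))) := by
      rw [tsum_eq_sum (s := Finset.range k) ?_]
      · refine Finset.sum_congr rfl fun n hn => ?_
        have hn' : (n : ℝ) + 1 ≤ (k : ℝ) := by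
          have := Finset.mem_range.mp hn
          exact_mod_cast this
        rw [min_eq_right (by positivity), min_eq_left (by linarith)]
        ring
      · intro n hn
        have hn' : (k : ℝ) ≤ (n : ℝ) := by
          have : k ≤ n := le_of_not_gt (fun h => hn (Finset.mem_range.mpr h))
          exact_mod_cast this
        rw [min_eq_right (by positivity), min_eq_right (by linarith)]
        ring
    rw [hsum, sum_range_affine, min_eq_right (by positivity)]
    ring
  · set M : ℕ := (-k - 1).toNat with hMdef
    have hM : (M : ℝ) = -(k : ℝ) - 1 := by
      have h1 : ((-k - 1).toNat : ℤ) = -k - 1 := Int.toNat_of_nonneg (by omega)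
      rw [hMdef]
      exact_mod_cast congrArg (fun z : ℤ => (z : ℝ)) h1
    have hk' : (k : ℝ) = -(M : ℝ) - 1 := by linarith
    have hsum : ∑' n : ℕ, (min ((n : ℝ) + 1 + ((k : ℝ) + f)) 0 + min ((n : ℝ) + 1 - ((k : ℝ) + f)) 0)
        = ∑ n ∈ Finset.range M, ((n : ℝ) + (1 + ((k : ℝ) + f))) := by
      rw [tsum_eq_sum (s := Finset.range M) ?_]
      · refine Finset.sum_congr rfl fun n hn => ?_
        have hn' : (n : ℝ) + 1 ≤ (M : ℝ) := by
          have := Finset.mem_range.mp hn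
          exact_mod_cast this
        rw [min_eq_left (by linarith), min_eq_right (by linarith)]
        ring
      · intro n hn
        have hn' : (M : ℝ) ≤ (n : ℝ) := by
          have : M ≤ n := le_of_not_gt (fun h => hn (Finset.mem_range.mpr h))
          exact_mod_cast this
        rw [min_eq_right (by linarith), min_eq_right (by linarith)]
        ring
    rw [hsum, sum_range_affine, min_eq_left (by linarith)]
    rw [hk']
    ring

private lemma abs_qPar (τ : ℂ) : ‖qPar τ‖ = Real.exp (-(2 * π * τ.im)) := by
  rw [qPar, Complex.norm_exp]
  congr 1
  simp [Complex.mul_re, Complex.mul_im]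

private lemma abs_eRat (c : ℚ) : ‖eRat c‖ = 1 := by
  rw [eRat, Complex.norm_exp]
  norm_num [Complex.mul_re, Complex.mul_im]

private lemma abs_qRatPow (τ : ℂ) (b : ℚ) :
    ‖qRatPow τ b‖ = ‖qPar τ‖ ^ ((b : ℝ)) := by
  rw [qRatPow, Complex.norm_exp, abs_qPar, ← Real.exp_log (Real.exp_pos (-(2 * π * τ.im))),
    Real.log_exp, ← Real.exp_mul]
  congr 1
  have : (2 * ↑Real.pi * Complex.I * (b:ℂ) * τ).re = -(2 * π * τ.im) * (b:ℝ) := by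
    simp [Complex.mul_re, Complex.mul_im]
    ring
  rw [this]

private lemma abs_int_add_ge (j : ℤ) {f : ℝ} (hf0 : 0 < f) (hf1 : f < 1) :
    min f (1 - f) ≤ |(j : ℝ) + f| := by
  rcases le_or_gt 0 j with hj | hj
  · have : (0:ℝ) ≤ (j:ℝ) := by exact_mod_cast hj
    refine le_abs.mpr (Or.inl ?_)
    calc min f (1-f) ≤ f := min_le_left _ _
      _ ≤ (j:ℝ) + f := by linarith
  · have : (j:ℝ) ≤ -1 := by
      have : j ≤ -1 := by omega
      exact_mod_cast this
    refine le_abs.mpr (Or.inr ?_)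
    calc min f (1-f) ≤ 1 - f := min_le_right _ _
      _ ≤ -((j:ℝ) + f) := by linarith

section geom
variable {r : ℝ}

private lemma summable_rpow_add (hr0 : 0 < r) (hr1 : r < 1) (b : ℝ) :
    Summable (fun n : ℕ => r ^ ((n : ℝ) + b)) := by
  have : (fun n : ℕ => r ^ ((n : ℝ) + b)) = fun n : ℕ => r ^ b * r ^ n := by
    funext n
    rw [Real.rpow_add hr0, Real.rpow_natCast, mul_comm]
  rw [this]
  exact (summable_geometric_of_lt_one hr0.le hr1).mul_left _

private lemma tsum_rpow_add (hr0 : 0 < r) (hr1 : r < 1) (b : ℝ) :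
    ∑' n : ℕ, r ^ ((n : ℝ) + b) = r ^ b / (1 - r) := by
  have : (fun n : ℕ => r ^ ((n : ℝ) + b)) = fun n : ℕ => r ^ b * r ^ n := by
    funext n
    rw [Real.rpow_add hr0, Real.rpow_natCast, mul_comm]
  rw [this, tsum_mul_left, tsum_geometric_of_lt_one hr0.le hr1, div_eq_mul_inv]

private lemma sum_rpow_add_le (hr0 : 0 < r) (hr1 : r < 1) (b : ℝ) (K : ℕ) :
    ∑ i ∈ Finset.range K, r ^ ((i : ℝ) + b) ≤ r ^ b / (1 - r) := by
  rw [← tsum_rpow_add hr0 hr1 b]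
  exact Summable.sum_le_tsum _ (fun i _ => (Real.rpow_pos_of_pos hr0 _).le)
    (summable_rpow_add hr0 hr1 b)

private lemma head_bdry_le {r : ℝ} (hr0 : 0 < r) (hr1 : r < 1) (b : ℝ) (K : ℕ) (F : ℕ → ℝ)
    (hF : ∀ n < K, F n = r ^ (((K:ℝ) - 1 - (n:ℝ)) + b)) :
    (∑ n ∈ Finset.range K, F n) + r ^ ((K:ℝ) + b) ≤ r ^ b / (1 - r) := by
  have hrefl : ∑ n ∈ Finset.range K, F n = ∑ j ∈ Finset.range K, r ^ ((j:ℝ) + b) := by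
    rw [← Finset.sum_range_reflect (fun j => r ^ ((j:ℝ) + b)) K]
    refine Finset.sum_congr rfl fun n hn => ?_
    have hnK := Finset.mem_range.mp hn
    rw [hF n hnK]
    congr 2
    rw [Nat.cast_sub (by omega), Nat.cast_sub (by omega)]
    push_cast
    ring
  rw [hrefl, ← Finset.sum_range_succ (fun j => r ^ ((j:ℝ) + b)) K]
  exact sum_rpow_add_le hr0 hr1 b (K+1)

end geom

set_option maxHeartbeats 8000000 in
/-- Let `a = (a₁,a₂) ∈ ℚ²` with `a₁ ∉ ℤ` and let `N > 0` satisfy `N·a₁ ∈ ℤ`. Then for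
every `τ ∈ ℍ` with `|q_τ| ≤ 10^{−N}` one has
`| log|g_a(τ)| − ℓ_a·log|q_τ| | ≤ 3·|q_τ|^{1/N}`. -/
theorem siegel_log_estimate_of_not_int (a : ℚ × ℚ) (ha : ¬ ∃ m : ℤ, a.1 = (m : ℚ))
    (N : ℕ) (hN : 0 < N) (hNa : ∃ m : ℤ, (N : ℚ) * a.1 = (m : ℚ))
    (τ : ℂ) (hτ : 0 < τ.im) (hq : ‖qPar τ‖ ≤ (10 : ℝ) ^ (-(N : ℤ))) :
    |Real.log (‖gSiegel a τ‖) -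
        (ℓSiegel a : ℝ) * Real.log (‖qPar τ‖)| ≤
      3 * ‖qPar τ‖ ^ (1 / (N : ℝ)) := by
  classical
  set q : ℂ := qPar τ with hq_def
  set r : ℝ := ‖q‖ with hr_def
  have hπ : (0:ℝ) < π := Real.pi_pos
  have hr0 : 0 < r := by rw [hr_def, hq_def, abs_qPar]; positivity
  have hr1 : r < 1 := by
    rw [hr_def, hq_def, abs_qPar]
    rw [Real.exp_lt_one_iff]
    nlinarith
  have hr10 : r ≤ 1/10 := by
    refine le_trans hq ?_
    have h1 : ((10:ℝ))^(-(N:ℤ)) = ((10:ℝ)^(N:ℕ))⁻¹ := by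
      rw [zpow_neg, zpow_natCast]
    have h2 : (10:ℝ) ≤ (10:ℝ)^(N:ℕ) := le_self_pow₀ (by norm_num) (by omega)
    rw [h1]
    rw [show (1:ℝ)/10 = ((10:ℝ))⁻¹ by norm_num]
    exact inv_anti₀ (by norm_num) h2
  set D : ℝ := Real.log r with hD_def
  have hDneg : D < 0 := Real.log_neg hr0 hr1
  set x : ℝ := ((a.1 : ℚ) : ℝ) with hx_def
  set k : ℤ := ⌊a.1⌋ with hk_def
  set f : ℝ := ((Int.fract a.1 : ℚ) : ℝ) with hf_def
  have hfq : Int.fract a.1 ≠ 0 := by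
    intro h
    refine ha ⟨⌊a.1⌋, ?_⟩
    have := Int.floor_add_fract a.1
    rw [h, add_zero] at this
    exact this.symm
  have hf0 : 0 < f := by
    rw [hf_def]
    exact_mod_cast lt_of_le_of_ne (Int.fract_nonneg a.1) (Ne.symm hfq)
  have hf1 : f < 1 := by
    rw [hf_def]
    exact_mod_cast Int.fract_lt_one a.1
  have hxkf : x = (k:ℝ) + f := by
    rw [hx_def, hf_def, hk_def]
    have := Int.floor_add_fract a.1
    push_cast
    exact_mod_cast congrArg (fun t : ℚ => (t:ℝ)) this.symm
  set c : ℝ := min f (1 - f) with hc_def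
  have hc0 : 0 < c := lt_min hf0 (by linarith)
  have hcf : c ≤ f := min_le_left _ _
  have hc1f : c ≤ 1 - f := min_le_right _ _
  -- 1/N ≤ c
  have hc1N : 1/(N:ℝ) ≤ c := by
    obtain ⟨m, hm⟩ := hNa
    have hNQ : (0:ℚ) < (N:ℚ) := by exact_mod_cast hN
    have hfract : Int.fract a.1 = a.1 - (k:ℚ) := by
      have := Int.floor_add_fract a.1
      rw [hk_def]
      linarith
    have hm' : ((m - N * k : ℤ) : ℚ) = (N:ℚ) * Int.fract a.1 := by
      push_cast
      rw [hfract, ← hm]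
      ring
    have hfr0 : (0:ℚ) < Int.fract a.1 :=
      lt_of_le_of_ne (Int.fract_nonneg a.1) (Ne.symm hfq)
    have hfr1 : Int.fract a.1 < 1 := Int.fract_lt_one a.1
    have h1 : (1:ℤ) ≤ m - N * k := by
      have h0 : (0:ℚ) < ((m - N * k : ℤ) : ℚ) := by rw [hm']; positivity
      have : (0:ℤ) < m - N * k := by exact_mod_cast h0
      omega
    have h2 : m - N * k ≤ (N:ℤ) - 1 := by
      have h0 : ((m - N * k : ℤ) : ℚ) < (N:ℚ) := by
        rw [hm']
        nlinarith
      have : (m - N*k : ℤ) < (N:ℤ) := by exact_mod_cast h0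
      omega
    have hfN : 1/(N:ℚ) ≤ Int.fract a.1 := by
      rw [div_le_iff₀ hNQ]
      have : (1:ℚ) ≤ ((m - N*k : ℤ):ℚ) := by exact_mod_cast h1
      rw [hm'] at this
      linarith
    have h1fN : 1/(N:ℚ) ≤ 1 - Int.fract a.1 := by
      rw [div_le_iff₀ hNQ]
      have : ((m - N*k : ℤ):ℚ) ≤ (N:ℚ) - 1 := by exact_mod_cast h2
      rw [hm'] at this
      nlinarith
    rw [hc_def]
    refine le_min ?_ ?_
    · rw [hf_def]
      have : ((1/(N:ℚ) : ℚ) : ℝ) ≤ ((Int.fract a.1 : ℚ) : ℝ) := by exact_mod_cast hfN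
      push_cast at this
      push_cast
      linarith
    · rw [hf_def]
      have : ((1/(N:ℚ) : ℚ) : ℝ) ≤ ((1 - Int.fract a.1 : ℚ) : ℝ) := by exact_mod_cast h1fN
      push_cast at this
      push_cast
      linarith
  have hr1N : r ^ (1/(N:ℝ)) ≤ 1/10 := by
    have h1 : r ^ (1/(N:ℝ)) ≤ ((10:ℝ)^(-(N:ℤ))) ^ (1/(N:ℝ)) :=
      Real.rpow_le_rpow hr0.le hq (by positivity)
    have h2 : ((10:ℝ)^(-(N:ℤ))) ^ (1/(N:ℝ)) = 1/10 := by
      rw [← Real.rpow_intCast 10 (-(N:ℤ)), ← Real.rpow_mul (by norm_num)]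
      have h3 : ((-(N:ℤ) : ℤ):ℝ) * (1/(N:ℝ)) = -1 := by
        have hN' : (N:ℝ) ≠ 0 := by positivity
        push_cast
        field_simp
      rw [h3, Real.rpow_neg_one]
      norm_num
    rw [h2] at h1
    exact h1
  have hrcN : r ^ c ≤ r ^ (1/(N:ℝ)) := Real.rpow_le_rpow_of_exponent_ge hr0 hr1.le hc1N
  have hrc10 : r ^ c ≤ 1/10 := le_trans hrcN hr1N
  -- complex setup
  set w₀ : ℂ := qRatPow τ a.1 * eRat a.2 with hw₀_def
  set U : ℕ → ℂ := fun n => q ^ (n+1) * w₀ with hU_def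
  set V : ℕ → ℂ := fun n => q ^ (n+1) / w₀ with hV_def
  have habs_w₀ : ‖w₀‖ = r ^ x := by
    rw [hw₀_def, norm_mul, abs_eRat, mul_one, abs_qRatPow, ← hq_def, ← hr_def, hx_def]
  have hx0 : x ≠ 0 := by
    intro h
    rw [hxkf] at h
    have : c ≤ |(k:ℝ) + f| := abs_int_add_ge k hf0 hf1
    rw [h] at this
    simp at this
    linarith
  have hcx : c ≤ |x| := by rw [hxkf]; exact abs_int_add_ge k hf0 hf1
  have he₁ : ∀ n : ℕ, c ≤ |(n:ℝ) + 1 + x| := by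
    intro n
    have := abs_int_add_ge ((n:ℤ) + 1 + k) hf0 hf1
    have heq : ((((n:ℤ) + 1 + k : ℤ)):ℝ) + f = (n:ℝ) + 1 + x := by
      rw [hxkf]; push_cast; ring
    rwa [heq] at this
  have he₂ : ∀ n : ℕ, c ≤ |(n:ℝ) + 1 - x| := by
    intro n
    have := abs_int_add_ge ((n:ℤ) - k) (f := 1 - f) (by linarith) (by linarith)
    have heq : ((((n:ℤ) - k : ℤ)):ℝ) + (1 - f) = (n:ℝ) + 1 - x := by
      rw [hxkf]; push_cast; ring
    rw [heq] at this
    calc c ≤ min (1-f) (1-(1-f)) := by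
          rw [show (1:ℝ)-(1-f) = f by ring, min_comm, hc_def]
      _ ≤ |(n:ℝ) + 1 - x| := this
  have habsU : ∀ n, ‖U n‖ = r ^ ((n:ℝ) + 1 + x) := by
    intro n
    rw [hU_def]
    simp only [norm_mul, norm_pow, habs_w₀]
    rw [← hr_def, ← Real.rpow_natCast r (n+1), ← Real.rpow_add hr0]
    congr 1
    push_cast
    ring
  have habsV : ∀ n, ‖V n‖ = r ^ ((n:ℝ) + 1 - x) := by
    intro n
    rw [hV_def]
    simp only [norm_div, norm_pow, habs_w₀]
    rw [← hr_def, ← Real.rpow_natCast r (n+1), ← Real.rpow_sub hr0]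
    congr 1
    push_cast
    ring
  -- nonvanishing of 1 - w
  have hrpow_ne_one : ∀ e : ℝ, e ≠ 0 → r ^ e ≠ 1 := by
    intro e he h
    have := Real.log_rpow hr0 e
    rw [h, Real.log_one] at this
    have := mul_eq_zero.mp this.symm
    rcases this with h1 | h1
    · exact he h1
    · rw [hD_def] at hDneg; rw [h1] at hDneg; exact lt_irrefl 0 hDneg
  have hsub_ne : ∀ w : ℂ, ∀ e : ℝ, ‖w‖ = r ^ e → e ≠ 0 → 1 - w ≠ 0 := by
    intro w e hw he h
    have hw1 : w = 1 := by
      have : (1:ℂ) - w = 0 := h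
      linear_combination -this
    rw [hw1] at hw
    simp at hw
    exact hrpow_ne_one e he hw.symm
  have he₁0 : ∀ n : ℕ, (n:ℝ) + 1 + x ≠ 0 := by
    intro n h
    have := he₁ n
    rw [h] at this
    simp at this
    linarith
  have he₂0 : ∀ n : ℕ, (n:ℝ) + 1 - x ≠ 0 := by
    intro n h
    have := he₂ n
    rw [h] at this
    simp at this
    linarith
  have hU1 : ∀ n, (1:ℂ) - U n ≠ 0 := fun n => hsub_ne _ _ (habsU n) (he₁0 n)
  have hV1 : ∀ n, (1:ℂ) - V n ≠ 0 := fun n => hsub_ne _ _ (habsV n) (he₂0 n)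
  have hw₀1 : (1:ℂ) - w₀ ≠ 0 := hsub_ne _ _ habs_w₀ hx0
  -- majorant facts
  have hmaj₁ : ∀ n : ℕ, r ^ |(n:ℝ) + 1 + x| ≤ r ^ ((n:ℝ) + (1 - |x|)) := by
    intro n
    apply Real.rpow_le_rpow_of_exponent_ge hr0 hr1.le
    have h1 : |(n:ℝ) + 1| ≤ |(n:ℝ) + 1 + x| + |x| := by
      calc |(n:ℝ) + 1| = |((n:ℝ) + 1 + x) + (-x)| := by ring_nf
        _ ≤ |(n:ℝ) + 1 + x| + |(-x)| := abs_add_le _ _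
        _ = |(n:ℝ) + 1 + x| + |x| := by rw [abs_neg]
    have h2 : |(n:ℝ) + 1| = (n:ℝ) + 1 := abs_of_pos (by positivity)
    linarith
  have hmaj₂ : ∀ n : ℕ, r ^ |(n:ℝ) + 1 - x| ≤ r ^ ((n:ℝ) + (1 - |x|)) := by
    intro n
    apply Real.rpow_le_rpow_of_exponent_ge hr0 hr1.le
    have h1 : |(n:ℝ) + 1| ≤ |(n:ℝ) + 1 - x| + |x| := by
      calc |(n:ℝ) + 1| = |((n:ℝ) + 1 - x) + x| := by ring_nf
        _ ≤ |(n:ℝ) + 1 - x| + |x| := abs_add_le _ _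
    have h2 : |(n:ℝ) + 1| = (n:ℝ) + 1 := abs_of_pos (by positivity)
    linarith
  have Smaj₁ : Summable (fun n : ℕ => r ^ |(n:ℝ) + 1 + x|) :=
    Summable.of_nonneg_of_le (fun n => (Real.rpow_pos_of_pos hr0 _).le) hmaj₁
      (summable_rpow_add hr0 hr1 (1 - |x|))
  have Smaj₂ : Summable (fun n : ℕ => r ^ |(n:ℝ) + 1 - x|) :=
    Summable.of_nonneg_of_le (fun n => (Real.rpow_pos_of_pos hr0 _).le) hmaj₂
      (summable_rpow_add hr0 hr1 (1 - |x|))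
  -- eventual bounds for logs
  set C : ℝ := r ^ ((1:ℝ) - |x|) with hC_def
  have hC0 : 0 < C := Real.rpow_pos_of_pos hr0 _
  have hUb : ∀ n : ℕ, ‖U n‖ ≤ C * r ^ (n:ℕ) := by
    intro n
    rw [habsU n]
    calc r ^ ((n:ℝ) + 1 + x) ≤ r ^ ((n:ℝ) + (1 - |x|)) := by
          apply Real.rpow_le_rpow_of_exponent_ge hr0 hr1.le
          have := neg_abs_le x
          linarith
      _ = C * r ^ (n:ℕ) := by
          rw [hC_def, ← Real.rpow_natCast r n, ← Real.rpow_add hr0]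
          congr 1
          ring
  have hVb : ∀ n : ℕ, ‖V n‖ ≤ C * r ^ (n:ℕ) := by
    intro n
    rw [habsV n]
    calc r ^ ((n:ℝ) + 1 - x) ≤ r ^ ((n:ℝ) + (1 - |x|)) := by
          apply Real.rpow_le_rpow_of_exponent_ge hr0 hr1.le
          have := le_abs_self x
          linarith
      _ = C * r ^ (n:ℕ) := by
          rw [hC_def, ← Real.rpow_natCast r n, ← Real.rpow_add hr0]
          congr 1
          ring
  have hev : ∀ᶠ n : ℕ in Filter.atTop, C * r ^ n ≤ 1/2 := by
    have hgeo : Filter.Tendsto (fun n : ℕ => C * r ^ n) Filter.atTop (nhds 0) := by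
      have := (tendsto_pow_atTop_nhds_zero_of_lt_one hr0.le hr1).const_mul C
      simpa using this
    exact hgeo.eventually_le_const (by norm_num)
  have hgeoC : Summable (fun n : ℕ => 3/2 * (C * r ^ n)) :=
    ((summable_geometric_of_lt_one hr0.le hr1).mul_left C).mul_left (3/2)
  have hlog_ev : ∀ (W : ℕ → ℂ), (∀ n, ‖W n‖ ≤ C * r ^ n) →
      (∀ᶠ n : ℕ in Filter.atTop, ‖Complex.log (1 - W n)‖ ≤ 3/2 * (C * r ^ n)) := by
    intro W hW
    filter_upwards [hev] with n hn
    have h1 : ‖-W n‖ ≤ 1/2 := by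
      rw [norm_neg]
      exact le_trans (hW n) hn
    calc ‖Complex.log (1 - W n)‖ = ‖Complex.log (1 + (-W n))‖ := by rw [sub_eq_add_neg]
      _ ≤ 3/2 * ‖-W n‖ := Complex.norm_log_one_add_half_le_self h1
      _ ≤ 3/2 * (C * r ^ n) := by
          rw [norm_neg]
          nlinarith [hW n]
  have hlogU_sum : Summable (fun n => Complex.log (1 - U n)) :=
    Summable.of_norm_bounded_eventually_nat hgeoC (hlog_ev U hUb)
  have hlogV_sum : Summable (fun n => Complex.log (1 - V n)) :=
    Summable.of_norm_bounded_eventually_nat hgeoC (hlog_ev V hVb)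
  have SLu : Summable (fun n => Real.log (‖1 - U n‖)) := by
    apply Summable.of_norm_bounded_eventually_nat hgeoC
    filter_upwards [hlog_ev U hUb] with n hn
    rw [Real.norm_eq_abs, ← Complex.log_re]
    exact le_trans (Complex.abs_re_le_norm _) hn
  have SLv : Summable (fun n => Real.log (‖1 - V n‖)) := by
    apply Summable.of_norm_bounded_eventually_nat hgeoC
    filter_upwards [hlog_ev V hVb] with n hn
    rw [Real.norm_eq_abs, ← Complex.log_re]
    exact le_trans (Complex.abs_re_le_norm _) hn
  -- multipliability
  have MU : Multipliable (fun n => (1:ℂ) - U n) :=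
    Complex.multipliable_of_summable_log hlogU_sum
  have MV : Multipliable (fun n => (1:ℂ) - V n) :=
    Complex.multipliable_of_summable_log hlogV_sum
  have MF : Multipliable (fun n => ((1:ℂ) - U n) * ((1:ℂ) - V n)) := MU.mul MV
  -- abs and log of the infinite product
  have habsP : ‖∏' n : ℕ, ((1 - U n) * (1 - V n))‖
      = ∏' n : ℕ, ‖(1 - U n) * (1 - V n)‖ := MF.norm_tprod
  have hGpos : ∀ n : ℕ, 0 < ‖(1 - U n) * (1 - V n)‖ := by
    intro n
    rw [norm_mul]
    exact mul_pos ((norm_pos_iff.mpr (hU1 n))) ((norm_pos_iff.mpr (hV1 n)))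
  have hGlog : ∀ n : ℕ, Real.log (‖(1 - U n) * (1 - V n)‖)
      = Real.log (‖1 - U n‖) + Real.log (‖1 - V n‖) := by
    intro n
    rw [norm_mul, Real.log_mul (ne_of_gt ((norm_pos_iff.mpr (hU1 n))))
      (ne_of_gt ((norm_pos_iff.mpr (hV1 n))))]
  have SG : Summable (fun n : ℕ => Real.log (‖(1 - U n) * (1 - V n)‖)) := by
    have := SLu.add SLv
    apply this.congr
    intro n
    exact (hGlog n).symm
  have hPexp : ∏' n : ℕ, ‖(1 - U n) * (1 - V n)‖
      = Real.exp (∑' n : ℕ, Real.log (‖(1 - U n) * (1 - V n)‖)) := by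
    exact (Real.rexp_tsum_eq_tprod
      (f := fun n => ‖(1 - U n) * (1 - V n)‖) hGpos SG).symm
  have hPpos : 0 < ∏' n : ℕ, ‖(1 - U n) * (1 - V n)‖ := by
    rw [hPexp]; exact Real.exp_pos _
  have hlogP : Real.log (∏' n : ℕ, ‖(1 - U n) * (1 - V n)‖)
      = (∑' n : ℕ, Real.log (‖1 - U n‖))
        + ∑' n : ℕ, Real.log (‖1 - V n‖) := by
    rw [hPexp, Real.log_exp, ← Summable.tsum_add SLu SLv]
    exact tsum_congr hGlog
  -- abs of gSiegel
  have hgdef : gSiegel a τ = -(qRatPow τ (B₂ a.1 / 2)) * eRat (a.2 * (a.1 - 1) / 2) *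
      (1 - w₀) * ∏' n : ℕ, ((1 - U n) * (1 - V n)) := rfl
  have habsg : ‖gSiegel a τ‖
      = r ^ (((B₂ a.1 / 2 : ℚ)):ℝ) * ‖1 - w₀‖
        * ∏' n : ℕ, ‖(1 - U n) * (1 - V n)‖ := by
    rw [hgdef, norm_mul, norm_mul, norm_mul, norm_neg, abs_eRat, mul_one,
      abs_qRatPow, ← hq_def, ← hr_def, habsP]
  have hglog : Real.log (‖gSiegel a τ‖)
      = ((B₂ a.1 / 2 : ℚ):ℝ) * D + Real.log (‖1 - w₀‖)
        + ((∑' n : ℕ, Real.log (‖1 - U n‖))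
          + ∑' n : ℕ, Real.log (‖1 - V n‖)) := by
    rw [habsg, Real.log_mul, Real.log_mul, Real.log_rpow hr0, hlogP, hD_def]
    · exact ne_of_gt (Real.rpow_pos_of_pos hr0 _)
    · exact ne_of_gt ((norm_pos_iff.mpr hw₀1))
    · exact ne_of_gt (mul_pos (Real.rpow_pos_of_pos hr0 _) ((norm_pos_iff.mpr hw₀1)))
    · exact ne_of_gt hPpos
  -- summability of the min (divergent) parts
  have hminU_zero : ∀ n : ℕ, n ∉ Finset.range ((-(k+1)).toNat) → min ((n:ℝ) + 1 + x) 0 = 0 := by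
    intro n hn
    have h1 : ((-(k+1)).toNat) ≤ n := le_of_not_gt (fun h => hn (Finset.mem_range.mpr h))
    have h2 : ((-(k+1) : ℤ) : ℝ) ≤ ((((-(k+1)).toNat : ℕ) : ℝ)) := by
      exact_mod_cast Int.self_le_toNat _
    have h3 : (((-(k+1)).toNat : ℕ) : ℝ) ≤ (n:ℝ) := by exact_mod_cast h1
    apply min_eq_right
    rw [hxkf]
    push_cast at h2
    linarith
  have hminV_zero : ∀ n : ℕ, n ∉ Finset.range (k.toNat) → min ((n:ℝ) + 1 - x) 0 = 0 := by
    intro n hn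
    have h1 : k.toNat ≤ n := le_of_not_gt (fun h => hn (Finset.mem_range.mpr h))
    have h2 : ((k : ℤ) : ℝ) ≤ (((k.toNat : ℕ) : ℝ)) := by
      exact_mod_cast Int.self_le_toNat _
    have h3 : ((k.toNat : ℕ) : ℝ) ≤ (n:ℝ) := by exact_mod_cast h1
    apply min_eq_right
    rw [hxkf]
    linarith
  have SminU : Summable (fun n : ℕ => min ((n:ℝ) + 1 + x) 0) :=
    summable_of_ne_finset_zero hminU_zero
  have SminV : Summable (fun n : ℕ => min ((n:ℝ) + 1 - x) 0) :=
    summable_of_ne_finset_zero hminV_zero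
  have SMu : Summable (fun n : ℕ => D * min ((n:ℝ) + 1 + x) 0) := SminU.mul_left D
  have SMv : Summable (fun n : ℕ => D * min ((n:ℝ) + 1 - x) 0) := SminV.mul_left D
  have SDu : Summable (fun n : ℕ =>
      Real.log (‖1 - U n‖) - D * min ((n:ℝ) + 1 + x) 0) := SLu.sub SMu
  have SDv : Summable (fun n : ℕ =>
      Real.log (‖1 - V n‖) - D * min ((n:ℝ) + 1 - x) 0) := SLv.sub SMv
  -- the combinatorial identity
  have hT : min x 0 + ∑' n : ℕ, (min ((n:ℝ) + 1 + x) 0 + min ((n:ℝ) + 1 - x) 0)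
      = (f^2 - f - x^2 + x)/2 := by
    simp only [hxkf]
    exact min_identity k f hf0 hf1
  have hBq : B₂ a.1/2 - ℓSiegel a
      = ((a.1:ℚ)^2 - a.1 - (Int.fract a.1)^2 + Int.fract a.1)/2 := by
    simp only [B₂, ℓSiegel]
    ring
  have hB : ((B₂ a.1/2 : ℚ):ℝ) - (ℓSiegel a : ℝ) = (x^2 - x - f^2 + f)/2 := by
    have h := congrArg (fun t : ℚ => (t:ℝ)) hBq
    push_cast at h
    rw [hx_def, hf_def]
    push_cast
    linarith
  -- rearrangement
  have hrearr : Real.log (‖gSiegel a τ‖) - (ℓSiegel a : ℝ) * D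
      = (Real.log (‖1 - w₀‖) - D * min x 0)
        + (∑' n : ℕ, (Real.log (‖1 - U n‖) - D * min ((n:ℝ) + 1 + x) 0))
        + (∑' n : ℕ, (Real.log (‖1 - V n‖) - D * min ((n:ℝ) + 1 - x) 0)) := by
    have e1 : ∑' n : ℕ, (Real.log (‖1 - U n‖) - D * min ((n:ℝ) + 1 + x) 0)
        = (∑' n : ℕ, Real.log (‖1 - U n‖))
          - D * ∑' n : ℕ, min ((n:ℝ) + 1 + x) 0 := by
      rw [Summable.tsum_sub SLu SMu, tsum_mul_left]
    have e2 : ∑' n : ℕ, (Real.log (‖1 - V n‖) - D * min ((n:ℝ) + 1 - x) 0)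
        = (∑' n : ℕ, Real.log (‖1 - V n‖))
          - D * ∑' n : ℕ, min ((n:ℝ) + 1 - x) 0 := by
      rw [Summable.tsum_sub SLv SMv, tsum_mul_left]
    have e3 : ∑' n : ℕ, (min ((n:ℝ) + 1 + x) 0 + min ((n:ℝ) + 1 - x) 0)
        = (∑' n : ℕ, min ((n:ℝ) + 1 + x) 0) + ∑' n : ℕ, min ((n:ℝ) + 1 - x) 0 :=
      Summable.tsum_add SminU SminV
    rw [hglog, e1, e2]
    rw [e3] at hT
    linear_combination D * hT + D * hB
  -- pointwise bounds
  have hrabs : ∀ e : ℝ, c ≤ |e| → r ^ |e| ≤ 1/10 := by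
    intro e he
    exact le_trans (Real.rpow_le_rpow_of_exponent_ge hr0 hr1.le he) hrc10
  have hKy₀ : |Real.log (‖1 - w₀‖) - D * min x 0| ≤ 10/9 * r ^ |x| := by
    have := key_bound hr0 habs_w₀ hx0 (hrabs x hcx)
    rw [hD_def]
    exact this
  have hKyU : ∀ n : ℕ, |Real.log (‖1 - U n‖) - D * min ((n:ℝ) + 1 + x) 0|
      ≤ 10/9 * r ^ |(n:ℝ) + 1 + x| := by
    intro n
    have := key_bound hr0 (habsU n) (he₁0 n) (hrabs _ (he₁ n))
    rw [hD_def]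
    exact this
  have hKyV : ∀ n : ℕ, |Real.log (‖1 - V n‖) - D * min ((n:ℝ) + 1 - x) 0|
      ≤ 10/9 * r ^ |(n:ℝ) + 1 - x| := by
    intro n
    have := key_bound hr0 (habsV n) (he₂0 n) (hrabs _ (he₂ n))
    rw [hD_def]
    exact this
  -- tsum bounds
  have hb₁ : |∑' n : ℕ, (Real.log (‖1 - U n‖) - D * min ((n:ℝ) + 1 + x) 0)|
      ≤ 10/9 * ∑' n : ℕ, r ^ |(n:ℝ) + 1 + x| := by
    calc |∑' n : ℕ, (Real.log (‖1 - U n‖) - D * min ((n:ℝ) + 1 + x) 0)|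
        = ‖∑' n : ℕ, (Real.log (‖1 - U n‖) - D * min ((n:ℝ) + 1 + x) 0)‖ :=
          (Real.norm_eq_abs _).symm
      _ ≤ ∑' n : ℕ, ‖Real.log (‖1 - U n‖) - D * min ((n:ℝ) + 1 + x) 0‖ :=
          norm_tsum_le_tsum_norm (by simpa only [Real.norm_eq_abs] using SDu.abs)
      _ = ∑' n : ℕ, |Real.log (‖1 - U n‖) - D * min ((n:ℝ) + 1 + x) 0| :=
          tsum_congr (fun n => Real.norm_eq_abs _)
      _ ≤ ∑' n : ℕ, (10/9 * r ^ |(n:ℝ) + 1 + x|) :=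
          Summable.tsum_le_tsum hKyU SDu.abs (Smaj₁.mul_left _)
      _ = 10/9 * ∑' n : ℕ, r ^ |(n:ℝ) + 1 + x| := tsum_mul_left
  have hb₂ : |∑' n : ℕ, (Real.log (‖1 - V n‖) - D * min ((n:ℝ) + 1 - x) 0)|
      ≤ 10/9 * ∑' n : ℕ, r ^ |(n:ℝ) + 1 - x| := by
    calc |∑' n : ℕ, (Real.log (‖1 - V n‖) - D * min ((n:ℝ) + 1 - x) 0)|
        = ‖∑' n : ℕ, (Real.log (‖1 - V n‖) - D * min ((n:ℝ) + 1 - x) 0)‖ :=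
          (Real.norm_eq_abs _).symm
      _ ≤ ∑' n : ℕ, ‖Real.log (‖1 - V n‖) - D * min ((n:ℝ) + 1 - x) 0‖ :=
          norm_tsum_le_tsum_norm (by simpa only [Real.norm_eq_abs] using SDv.abs)
      _ = ∑' n : ℕ, |Real.log (‖1 - V n‖) - D * min ((n:ℝ) + 1 - x) 0| :=
          tsum_congr (fun n => Real.norm_eq_abs _)
      _ ≤ ∑' n : ℕ, (10/9 * r ^ |(n:ℝ) + 1 - x|) :=
          Summable.tsum_le_tsum hKyV SDv.abs (Smaj₂.mul_left _)
      _ = 10/9 * ∑' n : ℕ, r ^ |(n:ℝ) + 1 - x| := tsum_mul_left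
  -- the geometric-series bound (the heart of the estimate)
  have BND : r ^ |x| + (∑' n : ℕ, r ^ |(n:ℝ) + 1 + x|) + (∑' n : ℕ, r ^ |(n:ℝ) + 1 - x|)
      ≤ (2 + r) * r ^ c / (1 - r) := by
    have h9 : (0:ℝ) < 1 - r := by linarith
    have hrf : r ^ f ≤ r ^ c := Real.rpow_le_rpow_of_exponent_ge hr0 hr1.le hcf
    have hr1f : r ^ ((1:ℝ) - f) ≤ r ^ c := Real.rpow_le_rpow_of_exponent_ge hr0 hr1.le hc1f
    have hnum : ∀ y : ℝ, y ≤ r ^ c → r ^ f / (1-r) + r ^ ((1:ℝ)-f)/(1-r) + r * y/(1-r)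
        ≤ (2 + r) * r ^ c / (1-r) := by
      intro y hy
      rw [← add_div, ← add_div, div_le_div_iff₀ h9 h9]
      have : r * y ≤ r * r ^ c := mul_le_mul_of_nonneg_left hy hr0.le
      nlinarith
    rcases le_or_gt 0 k with hk | hk
    · -- k ≥ 0 : x > 0
      lift k to ℕ using hk with K hKeq
      have hxK : x = (K:ℝ) + f := by rw [hxkf]; push_cast; ring
      have hKnn : (0:ℝ) ≤ (K:ℝ) := by positivity
      have hxpos : 0 < x := by rw [hxK]; linarith
      have hS₁ : (∑' n : ℕ, r ^ |(n:ℝ) + 1 + x|) = r ^ ((1:ℝ) + x) / (1-r) := by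
        rw [tsum_congr (fun n : ℕ => by
          rw [abs_of_pos (show (0:ℝ) < (n:ℝ) + 1 + x by positivity),
            show (n:ℝ) + 1 + x = (n:ℝ) + ((1:ℝ) + x) by ring]),
          tsum_rpow_add hr0 hr1]
      have hS₁le : (∑' n : ℕ, r ^ |(n:ℝ) + 1 + x|) ≤ r * r ^ c / (1-r) := by
        rw [hS₁, show r * r ^ c = r ^ ((1:ℝ) + c) by rw [Real.rpow_add hr0, Real.rpow_one],
          div_eq_mul_inv, div_eq_mul_inv]
        exact mul_le_mul_of_nonneg_right
          (Real.rpow_le_rpow_of_exponent_ge hr0 hr1.le (by linarith))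
          (inv_nonneg.mpr h9.le)
      have hsplit := (Summable.sum_add_tsum_nat_add (f := fun n : ℕ => r ^ |(n:ℝ) + 1 - x|) K Smaj₂).symm
      have htail : (∑' n : ℕ, r ^ |((n + K : ℕ):ℝ) + 1 - x|) = r ^ ((1:ℝ) - f) / (1-r) := by
        rw [tsum_congr (fun n : ℕ => by
          rw [show ((n + K : ℕ):ℝ) + 1 - x = (n:ℝ) + ((1:ℝ) - f) by push_cast [hxK]; ring,
            abs_of_pos (show (0:ℝ) < (n:ℝ) + ((1:ℝ) - f) by
              have hn : (0:ℝ) ≤ (n:ℝ) := Nat.cast_nonneg n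
              linarith)]),
          tsum_rpow_add hr0 hr1]
      have hhead : (∑ n ∈ Finset.range K, r ^ |(n:ℝ) + 1 - x|) + r ^ ((K:ℝ) + f)
          ≤ r ^ f / (1-r) := by
        apply head_bdry_le hr0 hr1 f K
        intro n hn
        have hn' : (n:ℝ) + 1 ≤ (K:ℝ) := by exact_mod_cast hn
        rw [abs_of_neg (show (n:ℝ) + 1 - x < 0 by rw [hxK]; linarith)]
        congr 1
        rw [hxK]; ring
      have hbdry : r ^ |x| = r ^ ((K:ℝ) + f) := by rw [abs_of_pos hxpos, hxK]
      calc r ^ |x| + (∑' n : ℕ, r ^ |(n:ℝ) + 1 + x|) + (∑' n : ℕ, r ^ |(n:ℝ) + 1 - x|)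
          = ((∑ n ∈ Finset.range K, r ^ |(n:ℝ) + 1 - x|) + r ^ ((K:ℝ) + f))
            + (∑' n : ℕ, r ^ |((n + K : ℕ):ℝ) + 1 - x|)
            + (∑' n : ℕ, r ^ |(n:ℝ) + 1 + x|) := by
            rw [hbdry, hsplit]; push_cast; ring
        _ ≤ r ^ f / (1-r) + r ^ ((1:ℝ) - f) / (1-r) + r * r ^ c / (1-r) := by
            rw [htail]
            exact add_le_add (add_le_add hhead le_rfl) hS₁le
        _ ≤ (2 + r) * r ^ c / (1-r) := hnum _ le_rfl
    · -- k < 0 : x < 0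
      set K : ℕ := (-(k+1)).toNat with hKdef
      have hK : (K : ℝ) = -(k:ℝ) - 1 := by
        have h1 : ((-(k+1)).toNat : ℤ) = -(k+1) := Int.toNat_of_nonneg (by omega)
        rw [hKdef]
        have := congrArg (fun z : ℤ => (z : ℝ)) h1
        push_cast at this ⊢
        linarith
      have hxK : x = f - (K:ℝ) - 1 := by rw [hxkf]; rw [show (k:ℝ) = -(K:ℝ) - 1 by linarith]; ring
      have hKnn : (0:ℝ) ≤ (K:ℝ) := by positivity
      have hxneg : x < 0 := by rw [hxK]; linarith
      have hxabs : |x| = (K:ℝ) + (1 - f) := by rw [abs_of_neg hxneg, hxK]; ring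
      have hcx' : c ≤ -x := by rw [← abs_of_neg hxneg]; exact hcx
      have hS₂ : (∑' n : ℕ, r ^ |(n:ℝ) + 1 - x|) = r ^ ((1:ℝ) - x) / (1-r) := by
        rw [tsum_congr (fun n : ℕ => by
          rw [show (n:ℝ) + 1 - x = (n:ℝ) + ((1:ℝ) - x) by ring,
            abs_of_pos (show (0:ℝ) < (n:ℝ) + ((1:ℝ) - x) by
              have hn : (0:ℝ) ≤ (n:ℝ) := Nat.cast_nonneg n
              linarith)]),
          tsum_rpow_add hr0 hr1]
      have hS₂le : (∑' n : ℕ, r ^ |(n:ℝ) + 1 - x|) ≤ r * r ^ c / (1-r) := by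
        rw [hS₂, show r * r ^ c = r ^ ((1:ℝ) + c) by rw [Real.rpow_add hr0, Real.rpow_one],
          div_eq_mul_inv, div_eq_mul_inv]
        exact mul_le_mul_of_nonneg_right
          (Real.rpow_le_rpow_of_exponent_ge hr0 hr1.le (by linarith))
          (inv_nonneg.mpr h9.le)
      have hsplit := (Summable.sum_add_tsum_nat_add (f := fun n : ℕ => r ^ |(n:ℝ) + 1 + x|) K Smaj₁).symm
      have htail : (∑' n : ℕ, r ^ |((n + K : ℕ):ℝ) + 1 + x|) = r ^ f / (1-r) := by
        rw [tsum_congr (fun n : ℕ => by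
          rw [show ((n + K : ℕ):ℝ) + 1 + x = (n:ℝ) + f by push_cast [hxK]; ring,
            abs_of_pos (show (0:ℝ) < (n:ℝ) + f by
              have hn : (0:ℝ) ≤ (n:ℝ) := Nat.cast_nonneg n
              linarith)]),
          tsum_rpow_add hr0 hr1]
      have hhead : (∑ n ∈ Finset.range K, r ^ |(n:ℝ) + 1 + x|) + r ^ ((K:ℝ) + (1 - f))
          ≤ r ^ ((1:ℝ) - f) / (1-r) := by
        apply head_bdry_le hr0 hr1 ((1:ℝ) - f) K
        intro n hn
        have hn' : (n:ℝ) + 1 ≤ (K:ℝ) := by exact_mod_cast hn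
        show r ^ |(n:ℝ) + 1 + x| = r ^ (((K:ℝ) - 1 - (n:ℝ)) + ((1:ℝ) - f))
        rw [abs_of_neg (show (n:ℝ) + 1 + x < 0 by rw [hxK]; linarith)]
        congr 1
        rw [hxK]; ring
      have hbdry : r ^ |x| = r ^ ((K:ℝ) + (1 - f)) := by rw [hxabs]
      calc r ^ |x| + (∑' n : ℕ, r ^ |(n:ℝ) + 1 + x|) + (∑' n : ℕ, r ^ |(n:ℝ) + 1 - x|)
          = ((∑ n ∈ Finset.range K, r ^ |(n:ℝ) + 1 + x|) + r ^ ((K:ℝ) + (1 - f)))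
            + (∑' n : ℕ, r ^ |((n + K : ℕ):ℝ) + 1 + x|)
            + (∑' n : ℕ, r ^ |(n:ℝ) + 1 - x|) := by
            rw [hbdry, hsplit]; push_cast; ring
        _ ≤ r ^ ((1:ℝ) - f) / (1-r) + r ^ f / (1-r) + r * r ^ c / (1-r) := by
            rw [htail]
            exact add_le_add (add_le_add hhead le_rfl) hS₂le
        _ ≤ (2 + r) * r ^ c / (1-r) := by
            have := hnum (r ^ c) le_rfl
            linarith
  -- final numeric computation
  have hApos : 0 < r ^ c := Real.rpow_pos_of_pos hr0 _
  have hBpos : 0 < r ^ (1/(N:ℝ)) := Real.rpow_pos_of_pos hr0 _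
  have hfinal : 10/9 * ((2 + r) * r ^ c / (1 - r)) ≤ 3 * r ^ (1/(N:ℝ)) := by
    have h9 : (0:ℝ) < 1 - r := by linarith
    rw [show 10/9 * ((2 + r) * r ^ c / (1 - r)) = (10/9 * ((2 + r) * r ^ c)) / (1 - r) by ring,
      div_le_iff₀ h9]
    have h2 : (10/9*(2+r)) * (r^c) ≤ (10/9*(2+r)) * (r^(1/(N:ℝ))) :=
      mul_le_mul_of_nonneg_left hrcN (by nlinarith)
    nlinarith [mul_nonneg hBpos.le (show (0:ℝ) ≤ 7/9 - 37/9*r by linarith)]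
  calc |Real.log (‖gSiegel a τ‖) - (ℓSiegel a : ℝ) * D|
      ≤ |Real.log (‖1 - w₀‖) - D * min x 0|
        + |∑' n : ℕ, (Real.log (‖1 - U n‖) - D * min ((n:ℝ) + 1 + x) 0)|
        + |∑' n : ℕ, (Real.log (‖1 - V n‖) - D * min ((n:ℝ) + 1 - x) 0)| := by
        rw [hrearr]
        exact le_trans (abs_add_le _ _) (by gcongr; exact abs_add_le _ _)
    _ ≤ 10/9 * (r ^ |x| + (∑' n : ℕ, r ^ |(n:ℝ) + 1 + x|)
          + (∑' n : ℕ, r ^ |(n:ℝ) + 1 - x|)) := by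
        have := hKy₀
        linarith [hb₁, hb₂]
    _ ≤ 10/9 * ((2 + r) * r ^ c / (1 - r)) := by
        have h9 : (0:ℝ) < (10:ℝ)/9 := by norm_num
        nlinarith [BND]
    _ ≤ 3 * r ^ (1/(N:ℝ)) := hfinal
end

section
/- Let a = (a₁, a₂) ∈ ℚ² with a₁ ∈ ℤ and a₂ ∉ ℤ. Then for every τ in the upper half-plane ℍ with |q_τ| ≤ 0.1 one has | log|g_a(τ)| − ℓ_a·log|q_τ| − log|1 − e(a₂)| | ≤ 3·|q_τ|. -/
open scoped Real

lemma abs_log_abs_one_sub_le {z : ℂ} (hz : ‖z‖ ≤ 0.1) :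
    |Real.log (‖1 - z‖)| ≤ 19/18 * ‖z‖ := by
  have h1 : ‖z‖ < 1 := by norm_num at hz ⊢; linarith
  have hz0 : (0:ℝ) ≤ ‖z‖ := norm_nonneg z
  have hre : Real.log (‖1 - z‖) = (Complex.log (1 - z)).re := (Complex.log_re _).symm
  rw [hre]
  calc |(Complex.log (1 - z)).re| ≤ ‖Complex.log (1 - z)‖ := Complex.abs_re_le_norm _
    _ ≤ ‖(-z)‖^2 * (1 - ‖(-z)‖)⁻¹ / 2 + ‖(-z)‖ := by
        have := Complex.norm_log_one_add_le (z := -z) (by simpa using h1)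
        simpa [sub_eq_add_neg] using this
    _ ≤ 19/18 * ‖z‖ := by
        rw [norm_neg]
        have hn : ‖z‖ = ‖z‖ := rfl
        rw [hn]
        have h9 : (1 - ‖z‖)⁻¹ ≤ (0.9:ℝ)⁻¹ := by
          apply inv_anti₀ <;> norm_num at hz ⊢ <;> linarith
        have hs : ‖z‖ ^ 2 ≤ ‖z‖ * 0.1 := by
          rw [sq]; exact mul_le_mul_of_nonneg_left hz hz0
        have : ‖z‖ ^ 2 * (1 - ‖z‖)⁻¹ ≤ (‖z‖ * 0.1) * (0.9:ℝ)⁻¹ := by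
          apply mul_le_mul hs h9 (inv_nonneg.mpr (by linarith)) (by positivity)
        nlinarith


lemma summable_clog {q : ℂ} (c : ℂ) (hq : ‖q‖ < 1) :
    Summable fun n : ℕ => Complex.log (1 - q ^ (n+1) * c) := by
  rcases eq_or_ne c 0 with rfl | hc
  · simpa using summable_zero
  have hq0 : (0:ℝ) ≤ ‖q‖ := norm_nonneg q
  -- find N with abs q ^ (N+1) * abs c ≤ 1/2
  obtain ⟨N, hN⟩ : ∃ N : ℕ, ‖q‖ ^ (N+1) * ‖c‖ ≤ 1/2 := by
    rcases eq_or_ne (‖q‖) 0 with h0 | h0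
    · exact ⟨0, by simp [h0]⟩
    · have hc0 : 0 < ‖c‖ := norm_pos_iff.mpr hc
      have : Filter.Tendsto (fun n : ℕ => ‖q‖ ^ (n+1) * ‖c‖)
          Filter.atTop (nhds (0 * ‖c‖)) :=
        ((tendsto_pow_atTop_nhds_zero_of_lt_one hq0 hq).comp (Filter.tendsto_add_atTop_nat 1)).mul_const _
      rw [zero_mul] at this
      have := this.eventually_le_const (show (0:ℝ) < 1/2 by norm_num)
      exact this.exists
  rw [← summable_nat_add_iff N]
  apply Summable.of_norm
  have key : ∀ n : ℕ, ‖Complex.log (1 - q ^ (n + N + 1) * c)‖ ≤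
      (3/2 * (‖q‖ ^ (N+1) * ‖c‖)) * ‖q‖ ^ n := by
    intro n
    have habs : ‖q ^ (n + N + 1) * c‖ ≤ ‖q‖ ^ (N+1) * ‖c‖ := by
      rw [norm_mul, norm_pow]
      have : ‖q‖ ^ (n + N + 1) ≤ ‖q‖ ^ (N + 1) :=
        pow_le_pow_of_le_one hq0 hq.le (by omega)
      exact mul_le_mul_of_nonneg_right this (norm_nonneg c)
    have h12 : ‖q ^ (n + N + 1) * c‖ ≤ 1/2 := habs.trans hN
    have := Complex.norm_log_one_add_half_le_self (z := -(q ^ (n + N + 1) * c))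
      (by simpa using h12.trans (by norm_num))
    rw [← sub_eq_add_neg] at this
    calc ‖Complex.log (1 - q ^ (n + N + 1) * c)‖ ≤ 3/2 * ‖-(q ^ (n + N + 1) * c)‖ := this
      _ ≤ (3/2 * (‖q‖ ^ (N+1) * ‖c‖)) * ‖q‖ ^ n := by
          rw [norm_neg]
          have hn : ‖q ^ (n + N + 1) * c‖ = ‖q‖ ^ (n + N + 1) * ‖c‖ := by
            simp [norm_mul, norm_pow]
          rw [hn]
          have he : ‖q‖ ^ (n + N + 1) = ‖q‖ ^ n * ‖q‖ ^ (N+1) := by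
            ring
          rw [he]
          exact le_of_eq (by ring)
  exact Summable.of_nonneg_of_le (fun n => norm_nonneg _) key
    ((summable_geometric_of_lt_one hq0 hq).mul_left _)


noncomputable def Lf (q c : ℂ) : ℝ := ∑' n : ℕ, Real.log (‖1 - q ^ (n+1) * c‖)


lemma summable_rlog {q : ℂ} (c : ℂ) (hq : ‖q‖ < 1) :
    Summable fun n : ℕ => Real.log (‖1 - q ^ (n+1) * c‖) := by
  have h := (summable_clog c hq).hasSum
  have := Complex.hasSum_re h
  exact ⟨_, this.congr_fun fun n => (Complex.log_re _).symm⟩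

lemma hasProd_one_sub {q c : ℂ} (hq : ‖q‖ < 1)
    (h0 : ∀ n : ℕ, 1 - q ^ (n+1) * c ≠ 0) :
    HasProd (fun n : ℕ => 1 - q ^ (n+1) * c)
      (Complex.exp (∑' n : ℕ, Complex.log (1 - q ^ (n+1) * c))) := by
  have h := ((summable_clog c hq).hasSum).cexp
  exact h.congr_fun fun n => by simp [Function.comp, Complex.exp_log (h0 n)]

lemma log_abs_exp_sum {q c : ℂ} (hq : ‖q‖ < 1) :
    Real.log (‖Complex.exp (∑' n : ℕ, Complex.log (1 - q ^ (n+1) * c))‖) = Lf q c := by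
  rw [Complex.norm_exp, Real.log_exp, Complex.re_tsum (summable_clog c hq), Lf]
  exact tsum_congr fun n => Complex.log_re _

lemma log_abs_tprod {q w : ℂ} (hq : ‖q‖ < 1)
    (h1 : ∀ n : ℕ, 1 - q ^ (n+1) * w ≠ 0) (h2 : ∀ n : ℕ, 1 - q ^ (n+1) * w⁻¹ ≠ 0) :
    Real.log (‖∏' n : ℕ, ((1 - q ^ (n+1) * w) * (1 - q ^ (n+1) / w))‖) =
      Lf q w + Lf q w⁻¹ := by
  have hp : HasProd (fun n : ℕ => (1 - q ^ (n+1) * w) * (1 - q ^ (n+1) / w))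
      (Complex.exp (∑' n : ℕ, Complex.log (1 - q ^ (n+1) * w)) *
       Complex.exp (∑' n : ℕ, Complex.log (1 - q ^ (n+1) * w⁻¹))) := by
    have := (hasProd_one_sub hq h1).mul (hasProd_one_sub hq h2)
    exact this.congr_fun fun n => by rw [div_eq_mul_inv]
  rw [hp.tprod_eq, norm_mul, Real.log_mul (norm_ne_zero_iff.mpr (Complex.exp_ne_zero _)) (norm_ne_zero_iff.mpr (Complex.exp_ne_zero _)),
    log_abs_exp_sum hq, log_abs_exp_sum hq]


lemma tprod_ne_zero {q w : ℂ} (hq : ‖q‖ < 1)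
    (h1 : ∀ n : ℕ, 1 - q ^ (n+1) * w ≠ 0) (h2 : ∀ n : ℕ, 1 - q ^ (n+1) * w⁻¹ ≠ 0) :
    (∏' n : ℕ, ((1 - q ^ (n+1) * w) * (1 - q ^ (n+1) / w))) ≠ 0 := by
  have hp : HasProd (fun n : ℕ => (1 - q ^ (n+1) * w) * (1 - q ^ (n+1) / w))
      (Complex.exp (∑' n : ℕ, Complex.log (1 - q ^ (n+1) * w)) *
       Complex.exp (∑' n : ℕ, Complex.log (1 - q ^ (n+1) * w⁻¹))) := by
    have := (hasProd_one_sub hq h1).mul (hasProd_one_sub hq h2)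
    exact this.congr_fun fun n => by rw [div_eq_mul_inv]
  rw [hp.tprod_eq]
  exact mul_ne_zero (Complex.exp_ne_zero _) (Complex.exp_ne_zero _)


lemma log_one_sub_inv {c : ℂ} (hc : c ≠ 0) :
    Real.log (‖1 - c⁻¹‖) = Real.log (‖1 - c‖) - Real.log (‖c‖) := by
  have h : (1 - c⁻¹) = -c⁻¹ * (1 - c) := by field_simp; ring
  rcases eq_or_ne c 1 with rfl | hc1
  · simp
  · rw [h, norm_mul, Real.log_mul (norm_ne_zero_iff.mpr (by simp [hc])) (norm_ne_zero_iff.mpr (sub_ne_zero.mpr (Ne.symm hc1))),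
      norm_neg, norm_inv, Real.log_inv]
    ring

lemma Lf_shift {q c : ℂ} (hq0 : q ≠ 0) (hq : ‖q‖ < 1) (hc : c ≠ 0) :
    Real.log (‖1 - q * c‖) + Lf q (q * c) + Lf q (q * c)⁻¹ =
      Real.log (‖1 - c‖) + Lf q c + Lf q c⁻¹ - Real.log (‖c‖) := by
  -- Lf q c = log|1-q*c| + Lf q (q*c)
  have e1 : Lf q c = Real.log (‖1 - q * c‖) + Lf q (q * c) := by
    rw [Lf, Summable.tsum_eq_zero_add (summable_rlog c hq)]
    congr 1
    · norm_num
    · rw [Lf]; exact tsum_congr fun n => by rw [show q ^ (n+1+1) * c = q ^ (n+1) * (q * c) by ring]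
  -- Lf q (q*c)⁻¹ = log|1-c⁻¹| + Lf q c⁻¹
  have e2 : Lf q (q * c)⁻¹ = Real.log (‖1 - c⁻¹‖) + Lf q c⁻¹ := by
    have hsum : Summable fun n : ℕ => Real.log (‖1 - q ^ n * c⁻¹‖) := by
      rw [← summable_nat_add_iff 1]
      exact summable_rlog c⁻¹ hq
    have e3 : Lf q (q * c)⁻¹ = ∑' n : ℕ, Real.log (‖1 - q ^ n * c⁻¹‖) := by
      rw [Lf]
      exact tsum_congr fun n => by
        rw [mul_inv, show q ^ (n+1) * (q⁻¹ * c⁻¹) = q ^ n * (q * q⁻¹) * c⁻¹ by ring,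
          mul_inv_cancel₀ hq0, mul_one]
    rw [e3, Summable.tsum_eq_zero_add hsum]
    simp [Lf]
  rw [e1, e2, log_one_sub_inv hc]
  ring


lemma key_nat {q ζ : ℂ} (hq0 : q ≠ 0) (hq : ‖q‖ < 1) (hζa : ‖ζ‖ = 1)
    (hζ0 : ζ ≠ 0) (m : ℕ) :
    Real.log (‖1 - q ^ m * ζ‖) + Lf q (q ^ m * ζ) + Lf q (q ^ m * ζ)⁻¹ =
      -((m : ℝ) * ((m : ℝ) - 1) / 2) * Real.log (‖q‖) +
      (Real.log (‖1 - ζ‖) + Lf q ζ + Lf q ζ⁻¹) := by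
  induction m with
  | zero => simp
  | succ m ih =>
    have hc : q ^ m * ζ ≠ 0 := mul_ne_zero (pow_ne_zero m hq0) hζ0
    have habs : ‖q ^ m * ζ‖ = ‖q‖ ^ m := by
      rw [norm_mul, norm_pow, hζa, mul_one]
    have hshift := Lf_shift hq0 hq hc
    rw [show q * (q ^ m * ζ) = q ^ (m+1) * ζ by ring] at hshift
    rw [hshift, ih, habs, Real.log_pow]
    push_cast
    ring


lemma key_int {q ζ : ℂ} (hq0 : q ≠ 0) (hq : ‖q‖ < 1) (hζa : ‖ζ‖ = 1)
    (hζ0 : ζ ≠ 0) (m : ℤ) :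
    Real.log (‖1 - q ^ m * ζ‖) + Lf q (q ^ m * ζ) + Lf q (q ^ m * ζ)⁻¹ =
      -((m : ℝ) * ((m : ℝ) - 1) / 2) * Real.log (‖q‖) +
      (Real.log (‖1 - ζ‖) + Lf q ζ + Lf q ζ⁻¹) := by
  rcases le_or_gt 0 m with hm | hm
  · obtain ⟨k, rfl⟩ : ∃ k : ℕ, m = (k : ℤ) := ⟨m.toNat, (Int.toNat_of_nonneg hm).symm⟩
    rw [zpow_natCast]
    have := key_nat hq0 hq hζa hζ0 k
    rw [this]
    push_cast
    ring
  · set k : ℕ := (-m).toNat with hk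
    have hkm : (k : ℤ) = -m := Int.toNat_of_nonneg (by omega)
    set w : ℂ := q ^ m * ζ with hw
    have hw0 : w ≠ 0 := mul_ne_zero (zpow_ne_zero m hq0) hζ0
    have hwinv : w⁻¹ = q ^ k * ζ⁻¹ := by
      rw [hw, mul_inv]
      congr 1
      rw [← zpow_neg, ← hkm, zpow_natCast]
    have hkey := key_nat hq0 hq (by rw [norm_inv, hζa, inv_one]) (inv_ne_zero hζ0) k
    rw [← hwinv, inv_inv, inv_inv] at hkey
    have h1 : Real.log (‖1 - w⁻¹‖) =
        Real.log (‖1 - w‖) - Real.log (‖w‖) := log_one_sub_inv hw0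
    have h2 : Real.log (‖w‖) = (m : ℝ) * Real.log (‖q‖) := by
      rw [hw, norm_mul, hζa, mul_one, norm_zpow, Real.log_zpow]
    have h3 : Real.log (‖1 - ζ⁻¹‖) = Real.log (‖1 - ζ‖) := by
      rw [log_one_sub_inv hζ0, hζa, Real.log_one, sub_zero]
    have hcast : (k : ℝ) = -(m : ℝ) := by
      have := congrArg (Int.cast : ℤ → ℝ) hkm
      push_cast at this
      linarith
    rw [h1, h2, h3, hcast] at hkey
    linear_combination hkey


lemma Lf_bound {q c : ℂ} (hq : ‖q‖ ≤ 0.1) (hc : ‖c‖ = 1) :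
    |Lf q c| ≤ 95/81 * ‖q‖ := by
  set r := ‖q‖ with hr
  have hr0 : 0 ≤ r := norm_nonneg q
  have hr1 : r < 1 := lt_of_le_of_lt hq (by norm_num)
  have habs : ∀ n : ℕ, ‖q ^ (n+1) * c‖ = r ^ (n+1) := by
    intro n; rw [norm_mul, norm_pow, hc, mul_one]
  have hgeo : HasSum (fun n : ℕ => 19/18 * r ^ (n+1)) (19/18 * r * (1-r)⁻¹) := by
    have := (hasSum_geometric_of_lt_one hr0 hr1).mul_left (19/18 * r)
    exact this.congr_fun fun n => by rw [pow_succ]; ring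
  have hb : ∀ n : ℕ, ‖Real.log (‖1 - q ^ (n+1) * c‖)‖ ≤ 19/18 * r ^ (n+1) := by
    intro n
    rw [Real.norm_eq_abs]
    have h1 : ‖q ^ (n+1) * c‖ ≤ 0.1 := by
      rw [habs n]
      calc r ^ (n+1) ≤ r ^ 1 := pow_le_pow_of_le_one hr0 hr1.le (by omega)
        _ ≤ 0.1 := by simpa using hq
    have := abs_log_abs_one_sub_le h1
    rwa [habs n] at this
  have := tsum_of_norm_bounded hgeo hb
  rw [← Lf, Real.norm_eq_abs] at this
  refine this.trans ?_
  have h9 : (1 - r)⁻¹ ≤ (0.9:ℝ)⁻¹ := by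
    apply inv_anti₀ <;> norm_num at hq ⊢ <;> linarith
  nlinarith [mul_le_mul_of_nonneg_left h9 (mul_nonneg (by norm_num : (0:ℝ) ≤ 19/18) hr0)]

/-- Let `a = (a₁,a₂) ∈ ℚ²` with `a₁ ∈ ℤ` and `a₂ ∉ ℤ`. Then for every `τ ∈ ℍ` with
`|q_τ| ≤ 0.1` one has `| log|g_a(τ)| − ℓ_a·log|q_τ| − log|1 − e(a₂)| | ≤ 3·|q_τ|`. -/
theorem siegel_log_estimate_of_int (a : ℚ × ℚ) (ha1 : ∃ m : ℤ, a.1 = (m : ℚ))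
    (ha2 : ¬ ∃ m : ℤ, a.2 = (m : ℚ))
    (τ : ℂ) (hτ : 0 < τ.im) (hq : ‖qPar τ‖ ≤ 0.1) :
    |Real.log ‖gSiegel a τ‖ -
        (ℓSiegel a : ℝ) * Real.log ‖qPar τ‖ -
        Real.log ‖1 - eRat a.2‖| ≤
      3 * ‖qPar τ‖ := by
  obtain ⟨m, hm⟩ := ha1
  set q : ℂ := qPar τ with hqdef
  set ζ : ℂ := eRat a.2 with hζdef
  have hq0 : q ≠ 0 := Complex.exp_ne_zero _
  have hrpos : 0 < ‖q‖ := norm_pos_iff.mpr hq0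
  have hrlt : ‖q‖ < 1 := lt_of_le_of_lt hq (by norm_num)
  -- |eRat x| = 1
  have habs_eRat : ∀ x : ℚ, ‖eRat x‖ = 1 := by
    intro x
    rw [eRat, Complex.norm_exp]
    have : (2 * (Real.pi : ℂ) * Complex.I * (x : ℂ)).re = 0 := by
      have hx : ((x : ℚ) : ℂ) = ((x : ℝ) : ℂ) := by push_cast; ring
      rw [hx]
      simp [Complex.mul_re, Complex.mul_im]
    rw [this, Real.exp_zero]
  have hζa : ‖ζ‖ = 1 := habs_eRat a.2
  have hζ0 : ζ ≠ 0 := by intro h; rw [h] at hζa; simp at hζa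
  -- ζ ≠ 1
  have hζ1 : ζ ≠ 1 := by
    intro h
    rw [hζdef, eRat, Complex.exp_eq_one_iff] at h
    obtain ⟨n, hn⟩ := h
    apply ha2
    refine ⟨n, ?_⟩
    have hne : (2 * (Real.pi : ℂ) * Complex.I) ≠ 0 := by
      simp [Real.pi_ne_zero, Complex.I_ne_zero]
    have h2 : (2 * (Real.pi : ℂ) * Complex.I) * (a.2 : ℂ) =
        (2 * (Real.pi : ℂ) * Complex.I) * (n : ℂ) := by rw [hn]; ring
    have h3 : ((a.2 : ℚ) : ℂ) = ((n : ℚ) : ℂ) := by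
      have := mul_left_cancel₀ hne h2
      push_cast at this ⊢
      exact this
    exact_mod_cast h3
  -- nonvanishing of factors
  have hqz : ∀ (u : ℂ), ‖u‖ = 1 → u ≠ 1 → ∀ k : ℤ, q ^ k * u ≠ 1 := by
    intro u hu hu1 k h
    have habs : ‖q‖ ^ k = 1 := by
      have := congrArg norm h
      rwa [norm_mul, norm_zpow, hu, mul_one, norm_one] at this
    have hk0 : k = 0 := by
      have hinj := zpow_right_injective₀ hrpos (ne_of_lt hrlt)
      have : ‖q‖ ^ k = ‖q‖ ^ (0 : ℤ) := by rw [habs, zpow_zero]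
      exact hinj this
    rw [hk0, zpow_zero, one_mul] at h
    exact hu1 h
  -- w = q^m * ζ
  have hqrp : qRatPow τ a.1 = q ^ (m : ℤ) := by
    rw [hm, qRatPow, hqdef, qPar, ← Complex.exp_int_mul]
    congr 1
    push_cast
    ring
  set w : ℂ := qRatPow τ a.1 * ζ with hwdef
  have hw : w = q ^ (m : ℤ) * ζ := by rw [hwdef, hqrp]
  have hwinv : w⁻¹ = q ^ (-m : ℤ) * ζ⁻¹ := by rw [hw, mul_inv, ← zpow_neg]
  have h1 : ∀ n : ℕ, 1 - q ^ (n+1) * w ≠ 0 := by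
    intro n
    refine sub_ne_zero.mpr fun h => ?_
    have he : q ^ ((n:ℤ) + 1 + m) * ζ = q ^ (n+1) * w := by
      rw [hw, zpow_add₀ hq0, show ((n:ℤ)+1) = ((n+1:ℕ):ℤ) by push_cast; ring,
        zpow_natCast, mul_assoc]
    exact hqz ζ hζa hζ1 _ (he.trans h.symm)
  have h2 : ∀ n : ℕ, 1 - q ^ (n+1) * w⁻¹ ≠ 0 := by
    intro n
    refine sub_ne_zero.mpr fun h => ?_
    have he : q ^ ((n:ℤ) + 1 + (-m)) * ζ⁻¹ = q ^ (n+1) * w⁻¹ := by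
      rw [hwinv, zpow_add₀ hq0, show ((n:ℤ)+1) = ((n+1:ℕ):ℤ) by push_cast; ring,
        zpow_natCast, mul_assoc]
    exact hqz ζ⁻¹ (by rw [norm_inv, hζa, inv_one]) (fun hh => hζ1 (inv_eq_one.mp hh)) _
      (he.trans h.symm)
  -- log of |qRatPow τ c|
  have hlogq : ∀ c : ℚ, Real.log (‖qRatPow τ c‖) = (c : ℝ) * Real.log (‖q‖) := by
    intro c
    rw [qRatPow, Complex.norm_exp, Real.log_exp, hqdef, qPar, Complex.norm_exp, Real.log_exp]
    have hc : (2 * (Real.pi : ℂ) * Complex.I * (c : ℂ) * τ) =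
        ((c : ℝ) : ℂ) * (2 * (Real.pi : ℂ) * Complex.I * τ) := by push_cast; ring
    rw [hc, Complex.re_ofReal_mul]
  -- expand log |gSiegel|
  have hA0 : ‖qRatPow τ (B₂ a.1 / 2)‖ ≠ 0 :=
    norm_ne_zero_iff.mpr (Complex.exp_ne_zero _)
  have hC0 : ‖1 - w‖ ≠ 0 := by
    refine norm_ne_zero_iff.mpr (sub_ne_zero.mpr fun h => hqz ζ hζa hζ1 m ?_)
    rw [← hw]; exact h.symm
  have hP0 : ‖∏' n : ℕ, ((1 - q ^ (n+1) * w) * (1 - q ^ (n+1) / w))‖ ≠ 0 :=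
    norm_ne_zero_iff.mpr (tprod_ne_zero hrlt h1 h2)
  have hg : ‖gSiegel a τ‖ = ‖qRatPow τ (B₂ a.1 / 2)‖ *
      (‖1 - w‖ *
        ‖∏' n : ℕ, ((1 - q ^ (n+1) * w) * (1 - q ^ (n+1) / w))‖) := by
    rw [gSiegel]
    simp only [← hζdef, ← hwdef, ← hqdef]
    rw [norm_mul, norm_mul, norm_mul, norm_neg, habs_eRat, mul_one]
    ring
  have hlg : Real.log (‖gSiegel a τ‖) =
      ((B₂ a.1 / 2 : ℚ) : ℝ) * Real.log (‖q‖) +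
      (Real.log (‖1 - w‖) + (Lf q w + Lf q w⁻¹)) := by
    rw [hg, Real.log_mul hA0 (mul_ne_zero hC0 hP0), Real.log_mul hC0 hP0,
      hlogq (B₂ a.1 / 2), log_abs_tprod hrlt h1 h2]
  -- key identity
  have hkey := key_int hq0 hrlt hζa hζ0 m
  rw [← hw] at hkey
  -- ℓSiegel value
  have hℓ : (ℓSiegel a : ℝ) = 1 / 12 := by
    rw [ℓSiegel, hm, Int.fract_intCast]
    norm_num [B₂]
  -- B₂ coefficient
  have hB : ((B₂ a.1 / 2 : ℚ) : ℝ) = (m : ℝ) * ((m : ℝ) - 1) / 2 + 1 / 12 := by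
    rw [hm, B₂]
    push_cast
    ring
  have hmain : Real.log (‖gSiegel a τ‖) -
      (ℓSiegel a : ℝ) * Real.log (‖q‖) -
      Real.log (‖1 - ζ‖) = Lf q ζ + Lf q ζ⁻¹ := by
    rw [hlg, hℓ, hB]
    linear_combination hkey
  rw [hmain]
  have b1 := Lf_bound hq hζa
  have b2 := Lf_bound hq (by rw [norm_inv, hζa, inv_one] : ‖ζ⁻¹‖ = 1)
  calc |Lf q ζ + Lf q ζ⁻¹| ≤ |Lf q ζ| + |Lf q ζ⁻¹| := abs_add_le _ _
    _ ≤ 95/81 * ‖q‖ + 95/81 * ‖q‖ := add_le_add b1 b2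
    _ ≤ 3 * ‖q‖ := by nlinarith [hrpos.le]
end

section
/- Let s and t be positive integers and let M be an s×t matrix with integer entries whose rank (over ℚ) equals s. Let A be a real number such that every entry of M has absolute value at most A. Then there exists a vector b ∈ ℤ^t with ℓ₁-norm ‖b‖₁ = Σ_{j=1}^t |b_j| ≤ s^{s/2+1}·A^{s−1} such that all s coordinates of the vector M·b are strictly positive. -/
open Matrix Finset

lemma hadamard_ineq (n : ℕ) (B : Matrix (Fin n) (Fin n) ℝ) :
    |B.det| ≤ ∏ j : Fin n, Real.sqrt (∑ i : Fin n, (B i j) ^ 2) := by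
  haveI : Fact (Module.finrank ℝ (EuclideanSpace ℝ (Fin n)) = n) :=
    ⟨finrank_euclideanSpace_fin⟩
  set b : OrthonormalBasis (Fin n) ℝ (EuclideanSpace ℝ (Fin n)) :=
    EuclideanSpace.basisFun (Fin n) ℝ
  set o : Orientation ℝ (EuclideanSpace ℝ (Fin n)) (Fin n) := b.toBasis.orientation
  set v : Fin n → EuclideanSpace ℝ (Fin n) := fun j => (WithLp.equiv 2 _).symm (fun i => B i j)
  have h1 : |o.volumeForm v| = |b.toBasis.det v| := o.volumeForm_robust' b v
  have h2 : |o.volumeForm v| ≤ ∏ i : Fin n, ‖v i‖ := o.abs_volumeForm_apply_le v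
  have h3 : b.toBasis.det v = B.det := by
    have hm : b.toBasis.toMatrix v = B := by
      ext i j
      simp [Module.Basis.toMatrix_apply, b, v]
    rw [Module.Basis.det_apply, hm]
  have h4 : ∀ j, ‖v j‖ = Real.sqrt (∑ i : Fin n, (B i j) ^ 2) := by
    intro j
    rw [EuclideanSpace.norm_eq]
    congr 1
    apply Finset.sum_congr rfl
    intro i _
    simp [v, sq_abs]
  calc |B.det| = |o.volumeForm v| := by rw [h1, h3]
    _ ≤ ∏ i : Fin n, ‖v i‖ := h2
    _ = _ := by simp [h4]

lemma exists_invertible_submatrix (s t : ℕ) (M : Matrix (Fin s) (Fin t) ℤ)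
    (hrank : (M.map ((↑) : ℤ → ℚ)).rank = s) :
    ∃ g : Fin s → Fin t, Function.Injective g ∧ (M.submatrix id g).det ≠ 0 := by
  classical
  set Q : Matrix (Fin s) (Fin t) ℚ := M.map ((↑) : ℤ → ℚ) with hQ
  have hspan : Submodule.span ℚ (Set.range Qᵀ) = ⊤ := by
    rw [show Set.range Qᵀ = Set.range Q.col from rfl, ← Matrix.range_mulVecLin]
    apply Submodule.eq_top_of_finrank_eq
    rw [Module.finrank_fin_fun]
    exact hrank
  obtain ⟨bset, hsub, hspan2, hli⟩ := exists_linearIndependent ℚ (Set.range Qᵀ)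
  haveI : Fintype bset := ((Set.finite_range Qᵀ).subset hsub).fintype
  have hspan3 : Submodule.span ℚ bset = ⊤ := by rw [hspan2, hspan]
  let basis : Module.Basis bset ℚ (Fin s → ℚ) :=
    Module.Basis.mk hli (by rw [Subtype.range_coe, hspan3])
  have hcard : Fintype.card bset = s := by
    rw [← Module.finrank_eq_card_basis basis, Module.finrank_fin_fun]
  let e : Fin s ≃ bset := (Fintype.equivFinOfCardEq hcard).symm
  have hchoose : ∀ x : bset, ∃ j, Qᵀ j = (x : Fin s → ℚ) := fun x => hsub x.2
  let g : Fin s → Fin t := fun k => (hchoose (e k)).choose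
  have hg : ∀ k, Qᵀ (g k) = ((e k : bset) : Fin s → ℚ) := fun k => (hchoose (e k)).choose_spec
  have hginj : Function.Injective g := by
    intro k k' h
    have : ((e k : bset) : Fin s → ℚ) = ((e k' : bset) : Fin s → ℚ) := by
      rw [← hg k, ← hg k', h]
    exact e.injective (Subtype.ext this)
  refine ⟨g, hginj, ?_⟩
  have hb2 : IsUnit ((Pi.basisFun ℚ (Fin s)).det (fun k => ((e k : bset) : Fin s → ℚ))) := by
    rw [← Module.Basis.is_basis_iff_det]
    have hco : (fun k => ((e k : bset) : Fin s → ℚ)) = ⇑(basis.reindex e.symm) := by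
      funext k
      simp [basis, Module.Basis.mk_apply]
    rw [hco]
    exact ⟨(basis.reindex e.symm).linearIndependent, (basis.reindex e.symm).span_eq⟩
  have hmat : (Pi.basisFun ℚ (Fin s)).toMatrix (fun k => ((e k : bset) : Fin s → ℚ))
      = (M.submatrix id g).map ((↑) : ℤ → ℚ) := by
    ext i k
    rw [Module.Basis.toMatrix_apply, ← hg k]
    simp [Q, Matrix.transpose_apply]
  have hdet : ((M.submatrix id g).map ((↑) : ℤ → ℚ)).det ≠ 0 := by
    rw [← hmat, ← Module.Basis.det_apply]
    exact hb2.ne_zero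
  intro h
  apply hdet
  have : (M.submatrix id g).map ((↑) : ℤ → ℚ) = ((Int.castRingHom ℚ).mapMatrix (M.submatrix id g)) := rfl
  rw [this, ← RingHom.map_det (Int.castRingHom ℚ), h]
  simp

lemma sum_extend_eq {R : Type*} [AddCommMonoid R] {s t : ℕ} (g : Fin s → Fin t)
    (hg : Function.Injective g) (y : Fin s → ℤ) (F : Fin t → ℤ → R) (h0 : ∀ j, F j 0 = 0) :
    ∑ j, F j (Function.extend g y 0 j) = ∑ k, F (g k) (y k) := by
  classical
  have h1 : ∑ j ∈ Finset.univ.image g, F j (Function.extend g y 0 j)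
      = ∑ k, F (g k) (Function.extend g y 0 (g k)) :=
    Finset.sum_image (fun x _ x' _ h => hg h)
  rw [← Finset.sum_subset (Finset.subset_univ (Finset.univ.image g)), h1]
  · apply Finset.sum_congr rfl
    intro k _
    rw [hg.extend_apply]
  · intro j _ hj
    rw [Function.extend_apply']
    · exact h0 j
    · rintro ⟨a, rfl⟩
      exact hj (Finset.mem_image_of_mem g (Finset.mem_univ a))


/-- Let `M` be an `s×t` integer matrix of rank `s` (over `ℚ`) whose entries are bounded
by `A` in absolute value. Then there is `b ∈ ℤᵗ` with `‖b‖₁ ≤ s^{s/2+1}·A^{s−1}` such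
that all `s` coordinates of `M·b` are strictly positive. -/
theorem exists_int_vector_positive_image (s t : ℕ) (hs : 0 < s) (ht : 0 < t)
    (M : Matrix (Fin s) (Fin t) ℤ)
    (hrank : (M.map ((↑) : ℤ → ℚ)).rank = s)
    (A : ℝ) (hA : ∀ i j, |(M i j : ℝ)| ≤ A) :
    ∃ b : Fin t → ℤ,
      (∑ j, |(b j : ℝ)|) ≤ (s : ℝ) ^ ((s : ℝ) / 2 + 1) * A ^ (s - 1) ∧
      ∀ i, 0 < M.mulVec b i := by
  classical
  obtain ⟨g, hginj, hdet⟩ := exists_invertible_submatrix s t M hrank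
  set N : Matrix (Fin s) (Fin s) ℤ := M.submatrix id g with hN
  set ε : ℤ := if 0 < N.det then 1 else -1 with hε
  have hεd : 0 < ε * N.det := by
    rcases lt_trichotomy N.det 0 with h | h | h
    · rw [hε, if_neg (by omega)]
      omega
    · exact absurd h hdet
    · rw [hε, if_pos h]
      omega
  set y : Fin s → ℤ := fun k => ε * Matrix.cramer N (fun _ => 1) k with hy
  refine ⟨Function.extend g y 0, ?_, ?_⟩
  · -- the norm bound
    have hA0 : 0 ≤ A := le_trans (abs_nonneg _) (hA ⟨0, hs⟩ ⟨0, ht⟩)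
    have hsum : (∑ j, |((Function.extend g y 0 j : ℤ) : ℝ)|) = ∑ k, |((y k : ℤ) : ℝ)| :=
      sum_extend_eq g hginj y (fun _ z => |(z : ℝ)|) (fun _ => by simp)
    rw [hsum]
    have hbound : ∀ k, |((y k : ℤ) : ℝ)| ≤ Real.sqrt s * (Real.sqrt s * A) ^ (s - 1) := by
      intro k
      have h1 : |((y k : ℤ) : ℝ)| = |(((N.updateCol k (fun _ => 1)).det : ℤ) : ℝ)| := by
        rw [hy]
        push_cast
        rw [abs_mul, Matrix.cramer_apply]
        rcases lt_or_ge 0 N.det with h | h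
        · simp [hε, h]
          exact congrArg _ (Int.cast_det _)
        · simp [hε, not_lt.mpr h]
          exact congrArg _ (Int.cast_det _)
      set Z : Matrix (Fin s) (Fin s) ℝ := (N.updateCol k (fun _ => 1)).map ((↑) : ℤ → ℝ) with hZ
      have h2 : |(((N.updateCol k (fun _ => 1)).det : ℤ) : ℝ)| = |Z.det| := by
        rw [hZ, show (N.updateCol k (fun _ => 1)).map ((↑) : ℤ → ℝ)
            = (Int.castRingHom ℝ).mapMatrix (N.updateCol k (fun _ => 1)) from rfl,
          ← RingHom.map_det]
        simp
      have hZapp : ∀ i j, Z i j = if j = k then (1 : ℝ) else ((N i j : ℤ) : ℝ) := by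
        intro i j
        rw [hZ, Matrix.map_apply, Matrix.updateCol_apply]
        split <;> simp
      calc |((y k : ℤ) : ℝ)| = |Z.det| := by rw [h1, h2]
        _ ≤ ∏ j : Fin s, Real.sqrt (∑ i : Fin s, (Z i j) ^ 2) := hadamard_ineq s Z
        _ ≤ ∏ j : Fin s, (if j = k then Real.sqrt s else Real.sqrt s * A) := by
            apply Finset.prod_le_prod (fun j _ => Real.sqrt_nonneg _)
            intro j _
            by_cases hjk : j = k
            · rw [if_pos hjk]
              have : ∀ i : Fin s, (Z i j) ^ 2 = 1 := by
                intro i; rw [hZapp i j, if_pos hjk]; norm_num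
              rw [Finset.sum_congr rfl (fun i _ => this i), Finset.sum_const,
                Finset.card_univ, Fintype.card_fin, nsmul_eq_mul, mul_one]
            · rw [if_neg hjk]
              have hb : ∀ i : Fin s, (Z i j) ^ 2 ≤ A ^ 2 := by
                intro i
                rw [hZapp i j, if_neg hjk, ← sq_abs]
                exact pow_le_pow_left₀ (abs_nonneg _) (hA i (g j)) 2
              calc Real.sqrt (∑ i : Fin s, (Z i j) ^ 2)
                  ≤ Real.sqrt (∑ _i : Fin s, A ^ 2) :=
                    Real.sqrt_le_sqrt (Finset.sum_le_sum (fun i _ => hb i))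
                _ = Real.sqrt s * A := by
                    rw [Finset.sum_const, Finset.card_univ, Fintype.card_fin, nsmul_eq_mul,
                      Real.sqrt_mul (by positivity), Real.sqrt_sq hA0]
        _ = Real.sqrt s * (Real.sqrt s * A) ^ (s - 1) := by
            rw [← Finset.mul_prod_erase Finset.univ _ (Finset.mem_univ k), if_pos rfl]
            congr 1
            rw [Finset.prod_congr rfl (fun j hj => if_neg (Finset.ne_of_mem_erase hj)),
              Finset.prod_const, Finset.card_erase_of_mem (Finset.mem_univ k),
              Finset.card_univ, Fintype.card_fin]
    calc (∑ k, |((y k : ℤ) : ℝ)|) ≤ ∑ _k : Fin s, Real.sqrt s * (Real.sqrt s * A) ^ (s - 1) :=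
          Finset.sum_le_sum (fun k _ => hbound k)
      _ = s * (Real.sqrt s * (Real.sqrt s * A) ^ (s - 1)) := by
          rw [Finset.sum_const, Finset.card_univ, Fintype.card_fin, nsmul_eq_mul]
      _ = (s : ℝ) ^ ((s : ℝ) / 2 + 1) * A ^ (s - 1) := by
          have hs0 : (0 : ℝ) < s := Nat.cast_pos.mpr hs
          have h5 : Real.sqrt s * Real.sqrt s ^ (s - 1) = Real.sqrt s ^ s := by
            rw [← pow_succ']
            congr 1
            omega
          have hsq : Real.sqrt s ^ s = (s : ℝ) ^ ((s : ℝ) / 2) := by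
            rw [Real.sqrt_eq_rpow, ← Real.rpow_natCast ((s : ℝ) ^ ((1 : ℝ) / 2)) s,
              ← Real.rpow_mul hs0.le]
            congr 1
            ring
          rw [mul_pow, Real.rpow_add hs0, Real.rpow_one, ← hsq, ← h5]
          ring
  · -- positivity
    intro i
    have : M.mulVec (Function.extend g y 0) i = N.mulVec y i := by
      show ∑ j, M i j * Function.extend g y 0 j = _
      rw [sum_extend_eq g hginj y (fun j z => M i j * z) (fun _ => mul_zero _)]
      rfl
    rw [this]
    have hc : N.mulVec (Matrix.cramer N (fun _ => 1)) = N.det • (fun _ => 1) :=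
      Matrix.mulVec_cramer N _
    have : N.mulVec y i = ε * N.det := by
      have : y = ε • (Matrix.cramer N (fun _ => 1) : Fin s → ℤ) := rfl
      rw [this, Matrix.mulVec_smul, hc]
      simp [smul_eq_mul]
    rw [this]
    exact hεd
end

section
/- Let G be a finite group and let A be a finitely generated torsion-free abelian group on which G acts by group automorphisms. For a ∈ A put a_G = Σ_{g ∈ G} g·a, and let A^G = {a ∈ A : g·a = a for all g ∈ G} be the subgroup of G-invariant elements. Let B be a subgroup of A of finite index. Then B_G = {b_G : b ∈ B} is a subgroup of finite index in A^G. -/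
/-- The subgroup `A^G` of `G`-invariant elements of `A`. -/
def invariantsAddSubgroup (G A : Type*) [Monoid G] [AddCommGroup A]
    [DistribMulAction G A] : AddSubgroup A where
  carrier := {a | ∀ g : G, g • a = a}
  add_mem' := by
    intro a b ha hb g
    rw [smul_add, ha g, hb g]
  zero_mem' := fun g => smul_zero g
  neg_mem' := by
    intro a ha g
    rw [smul_neg, ha g]

/-- The "norm" (trace) map `a ↦ a_G = Σ_{g ∈ G} g·a`, as an additive homomorphism. -/
def traceAddHom (G A : Type*) [Group G] [Fintype G] [AddCommGroup A]
    [DistribMulAction G A] : A →+ A where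
  toFun a := ∑ g : G, g • a
  map_zero' := by simp
  map_add' x y := by
    simp [smul_add, Finset.sum_add_distrib]

/-- Let `G` be a finite group acting by automorphisms on a finitely generated
torsion-free abelian group `A`, and let `B ≤ A` be a subgroup of finite index. Then
`B_G = {Σ_{g∈G} g·b : b ∈ B}` is a subgroup of finite index of the group `A^G` of
`G`-invariants. -/
theorem trace_of_finite_index_subgroup (G A : Type*) [Group G] [Fintype G]
    [AddCommGroup A] [DistribMulAction G A]
    (hfg : AddGroup.FG A)
    (htf : ∀ (n : ℕ) (a : A), n ≠ 0 → n • a = 0 → a = 0)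
    (B : AddSubgroup A) (hB : B.index ≠ 0) :
    B.map (traceAddHom G A) ≤ invariantsAddSubgroup G A ∧
      ((B.map (traceAddHom G A)).addSubgroupOf (invariantsAddSubgroup G A)).index ≠ 0 := by
  have hle : B.map (traceAddHom G A) ≤ invariantsAddSubgroup G A := by
    rintro _ ⟨b, -, rfl⟩ g
    show g • (∑ h : G, h • b) = ∑ h : G, h • b
    rw [Finset.smul_sum]
    exact Fintype.sum_equiv (Equiv.mulLeft g) _ _ (fun h => (mul_smul g h b).symm)
  refine ⟨hle, ?_⟩
  set V := invariantsAddSubgroup G A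
  set H := (B.map (traceAddHom G A)).addSubgroupOf V
  -- V is finitely generated
  haveI : Module.Finite ℤ A := Module.Finite.iff_addGroup_fg.mpr hfg
  haveI : IsNoetherian ℤ A := inferInstance
  have hVfg : AddGroup.FG V := by
    have : (AddSubgroup.toIntSubmodule V).FG := IsNoetherian.noetherian _
    have : Module.Finite ℤ (AddSubgroup.toIntSubmodule V) := ⟨by
      rwa [Submodule.fg_top]⟩
    exact Module.Finite.iff_addGroup_fg.mp this
  haveI := hVfg
  -- the quotient V ⧸ H is fg
  haveI : AddGroup.FG (V ⧸ H) := AddGroup.fg_of_surjective (QuotientAddGroup.mk'_surjective H)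
  set m : ℕ := B.index * Fintype.card G with hm
  have hm0 : m ≠ 0 := Nat.mul_ne_zero hB Fintype.card_ne_zero
  -- torsion
  have htors : AddMonoid.IsTorsion (V ⧸ H) := by
    intro x
    obtain ⟨a, rfl⟩ := QuotientAddGroup.mk'_surjective H x
    refine isOfFinAddOrder_iff_nsmul_eq_zero.mpr ⟨m, Nat.pos_of_ne_zero hm0, ?_⟩
    rw [← map_nsmul, QuotientAddGroup.mk'_apply, QuotientAddGroup.eq_zero_iff]
    show ((m • a : V) : A) ∈ B.map (traceAddHom G A)
    have hmem : B.index • (a : A) ∈ B := B.nsmul_index_mem (a : A)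
    refine ⟨B.index • (a : A), hmem, ?_⟩
    show ∑ g : G, g • (B.index • (a : A)) = ((m • a : V) : A)
    have ha : ∀ g : G, g • (a : A) = (a : A) := a.2
    calc ∑ g : G, g • (B.index • (a : A)) = ∑ g : G, B.index • (g • (a : A)) :=
          Finset.sum_congr rfl fun g _ => smul_comm g B.index (a : A)
      _ = ∑ _g : G, B.index • (a : A) := by simp [ha]
      _ = (m • a : V) := by
          rw [Finset.sum_const, smul_smul]
          simp [hm, mul_comm, Finset.card_univ]
  haveI : Finite (V ⧸ H) := AddCommGroup.finite_of_fg_torsion _ htors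
  exact AddSubgroup.index_ne_zero_of_finite
end
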